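/- arXiv:1709.10342 — 5 statements merged into one kernel-verified Lean document; each statement's English description precedes it below -/
import Mathlib

section
/- For any μ ∈ V ∖ {0}, the image under the diagonal-part map of the moment map evaluated on the nonzero part of the closure of the T-orbit of μ equals the convex hull of the weights of μ: Diag(m((closure of T·μ in V) ∖ {0})) = CH_μ. -/
open scoped BigOperators

namespace RNPaper

/-- Structure constants of a skew-symmetric algebra on `ℝⁿ`:
an element of `V = Λ²(ℝⁿ)*⊗ℝⁿ` written in the basis `μ_{ijk}`. -/
abbrev SC (n : ℕ) := Fin n → Fin n → Fin n → ℝ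

variable {n : ℕ}

def IsAntisym (c : SC n) : Prop := ∀ i j k, c j i k = - c i j k

/-- The bilinear map `ℝⁿ×ℝⁿ→ℝⁿ` associated to the structure constants `c`. -/
def br (c : SC n) (x y : Fin n → ℝ) : Fin n → ℝ :=
  fun k => ∑ i, ∑ j, x i * y j * c i j k

def IsJacobi (c : SC n) : Prop :=
  ∀ x y z : Fin n → ℝ,
    br c (br c x y) z + br c (br c y z) x + br c (br c z x) y = 0

def nest (c : SC n) (v : ℕ → (Fin n → ℝ)) : ℕ → (Fin n → ℝ)
  | 0 => v 0
  | k + 1 => br c (v (k + 1)) (nest c v k)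

def IsNilpotentBracket (c : SC n) : Prop :=
  ∃ N : ℕ, ∀ v : ℕ → (Fin n → ℝ), nest c v N = 0

/-- `c` is the Lie bracket of a nilpotent Lie algebra. -/
def IsNilpotentLie (c : SC n) : Prop := IsAntisym c ∧ IsJacobi c ∧ IsNilpotentBracket c

/-- `D` is a derivation of the algebra with structure constants `c`. -/
def IsDeriv (c : SC n) (D : Matrix (Fin n) (Fin n) ℝ) : Prop :=
  ∀ x y : Fin n → ℝ,
    D.mulVec (br c x y) = br c (D.mulVec x) y + br c x (D.mulVec y)

/-- The inner product on `V` making the basis `μ_{ijk}` (`i<j`) orthonormal. -/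
def innerV (c d : SC n) : ℝ := ∑ i, ∑ j, ∑ k, if i < j then c i j k * d i j k else 0

/-- The inner product `⟨A,B⟩ = tr(ABᵀ)` on matrices. -/
def innerM (A B : Matrix (Fin n) (Fin n) ℝ) : ℝ := ∑ a, ∑ b, A a b * B a b

/-- The `gl(n,ℝ)`-action `E·μ = Eμ(·,·) − μ(E·,·) − μ(·,E·)`. -/
def lieAct (E : Matrix (Fin n) (Fin n) ℝ) (c : SC n) : SC n :=
  fun i j k => (∑ l, E k l * c i j l) - (∑ p, E p i * c p j k) - (∑ p, E p j * c i p k)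

/-- The `GL(n,ℝ)`-action `(g·μ)(v,w) = g μ(g⁻¹v, g⁻¹w)` in structure constants. -/
def glAct (g : GL (Fin n) ℝ) (c : SC n) : SC n :=
  fun i j k => ∑ p, ∑ q, ∑ l,
    ((g⁻¹ : GL (Fin n) ℝ) : Matrix (Fin n) (Fin n) ℝ) p i
      * ((g⁻¹ : GL (Fin n) ℝ) : Matrix (Fin n) (Fin n) ℝ) q j
      * ((g : Matrix (Fin n) (Fin n) ℝ) k l) * c p q l

/-- `m` is the moment map: `⟨m(μ),E⟩ = |μ|⁻²⟨E·μ,μ⟩` for all symmetric `E` and `μ ≠ 0`,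
with `m(μ)` a symmetric matrix. -/
def IsMomentMap (m : SC n → Matrix (Fin n) (Fin n) ℝ) : Prop :=
  ∀ c : SC n, c ≠ 0 →
    (m c).IsSymm ∧
      ∀ E : Matrix (Fin n) (Fin n) ℝ, E.IsSymm →
        innerM (m c) E = (innerV c c)⁻¹ * innerV (lieAct E c) c

/-- The centralizer of `D` in `GL(n,ℝ)`. -/
def centralizerSet (D : Matrix (Fin n) (Fin n) ℝ) : Set (GL (Fin n) ℝ) :=
  {g | (g : Matrix (Fin n) (Fin n) ℝ) * D = D * (g : Matrix (Fin n) (Fin n) ℝ)}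

lemma one_mem_centralizerSet (D : Matrix (Fin n) (Fin n) ℝ) :
    (1 : GL (Fin n) ℝ) ∈ centralizerSet D := by
  simp [centralizerSet]

/-- `G_D`: the identity component of the centralizer of `D` in `GL(n,ℝ)`. -/
def GD (D : Matrix (Fin n) (Fin n) ℝ) : Set (GL (Fin n) ℝ) :=
  Subtype.val '' connectedComponent (⟨1, one_mem_centralizerSet D⟩ : centralizerSet D)

/-- The orbit of `c` under a set `S ⊆ GL(n,ℝ)`. -/
def orbitOf (S : Set (GL (Fin n) ℝ)) (c : SC n) : Set (SC n) :=
  (fun g => glAct g c) '' S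

noncomputable def diagAct (d : Fin n → ℝ) (c : SC n) : SC n :=
  fun i j k => (d k / (d i * d j)) * c i j k

/-- The orbit `T·μ` of the subgroup of diagonal matrices with positive entries. -/
def Torbit (c : SC n) : Set (SC n) :=
  {x | ∃ d : Fin n → ℝ, (∀ i, 0 < d i) ∧ x = diagAct d c}

/-- The weight `F_{ij}^k = E_kk − E_ii − E_jj`. -/
def Fwt (i j k : Fin n) : Matrix (Fin n) (Fin n) ℝ :=
  Matrix.single k k 1 - Matrix.single i i 1 - Matrix.single j j 1

/-- `CH_μ`: the convex hull of the weights of `μ`. -/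
def CHmu (c : SC n) : Set (Matrix (Fin n) (Fin n) ℝ) :=
  convexHull ℝ {M | ∃ i j k : Fin n, i < j ∧ c i j k ≠ 0 ∧ M = Fwt i j k}

/-- The diagonal part of a matrix. -/
def diagPart (A : Matrix (Fin n) (Fin n) ℝ) : Matrix (Fin n) (Fin n) ℝ :=
  Matrix.diagonal fun i => A i i

/-- Membership in `𝔱ⁿ_{>0}`, the diagonal matrices with positive diagonal entries. -/
def DiagPos (E : Matrix (Fin n) (Fin n) ℝ) : Prop :=
  ∃ d : Fin n → ℝ, (∀ i, 0 < d i) ∧ E = Matrix.diagonal d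

/-- The basis is nice for the bracket `c`. -/
def IsNice (c : SC n) : Prop :=
  (∀ i j k l, c i j k ≠ 0 → c i j l ≠ 0 → k = l) ∧
  ∀ i j r s k, c i j k ≠ 0 → c r s k ≠ 0 →
    ({i, j} : Finset (Fin n)) = {r, s} ∨
      Disjoint ({i, j} : Finset (Fin n)) ({r, s} : Finset (Fin n))

/-- `A` is diagonalizable over `ℝ`. -/
def IsDiagonalizableR {N : ℕ} (A : Matrix (Fin N) (Fin N) ℝ) : Prop :=
  ∃ g : GL (Fin N) ℝ, ∃ d : Fin N → ℝ,
    A = (g : Matrix (Fin N) (Fin N) ℝ) * Matrix.diagonal d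
      * ((g⁻¹ : GL (Fin N) ℝ) : Matrix (Fin N) (Fin N) ℝ)

/-- `D` extended by zero to `𝔰_D = ℝf ⊕ 𝔫` (index `0` corresponds to `f`). -/
def Dext (D : Matrix (Fin n) (Fin n) ℝ) : Matrix (Fin (n + 1)) (Fin (n + 1)) ℝ :=
  Matrix.of (Fin.cons (fun _ => (0 : ℝ)) (fun k => Fin.cons (0 : ℝ) (fun j => D k j)))

/-- The bracket of `𝔫` extended by zero to `𝔰_D = ℝf ⊕ 𝔫`. -/
def cext (c : SC n) : SC (n + 1) :=
  Fin.cons (fun _ _ => 0)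
    (fun i => Fin.cons (fun _ => 0) (fun j => Fin.cons 0 (fun k => c i j k)))

/-- Structure constants of the solvable extension `𝔰_D = ℝf ⊕ 𝔫`, `[f,X] = D X`. -/
def solvSC (D : Matrix (Fin n) (Fin n) ℝ) (c : SC n) : SC (n + 1) :=
  fun i j k =>
    (if i = 0 then Dext D k j else 0) - (if j = 0 then Dext D k i else 0) + cext c i j k

/-- The matrix of `ad X`. -/
def adM {N : ℕ} (γ : SC N) (X : Fin N → ℝ) : Matrix (Fin N) (Fin N) ℝ :=
  Matrix.of fun k j => ∑ i, X i * γ i j k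

/-- The bilinear form with Gram matrix `P`. -/
def bip {N : ℕ} (P : Matrix (Fin N) (Fin N) ℝ) (x y : Fin N → ℝ) : ℝ :=
  dotProduct x (P.mulVec y)

/-- `⟨Ric X,Y⟩` computed via the orthonormal basis `u`:
`−½Σ⟨[X,uₐ],[Y,uₐ]⟩ + ¼ΣΣ⟨[uₐ,u_b],X⟩⟨[uₐ,u_b],Y⟩ − ½ tr(ad X ∘ ad Y)
 − ½(⟨[H,X],Y⟩+⟨[H,Y],X⟩)`. -/
noncomputable def ricForm {N : ℕ} (γ : SC N) (P : Matrix (Fin N) (Fin N) ℝ)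
    (u : Fin N → (Fin N → ℝ)) (H : Fin N → ℝ) (X Y : Fin N → ℝ) : ℝ :=
  -(1 / 2) * (∑ a, bip P (br γ X (u a)) (br γ Y (u a)))
    + (1 / 4) * (∑ a, ∑ b, bip P (br γ (u a) (u b)) X * bip P (br γ (u a) (u b)) Y)
    - (1 / 2) * Matrix.trace (adM γ X * adM γ Y)
    - (1 / 2) * (bip P (br γ H X) Y + bip P (br γ H Y) X)

/-- `D` is a Ricci negative derivation of `𝔫`: the solvable extension `𝔰_D = ℝf ⊕ 𝔫`
admits an inner product (with Gram matrix `P`) such that `f ⟂ 𝔫`, `D` is symmetric,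
and the Ricci operator is negative definite. -/
def IsRicciNegative (c : SC n) (D : Matrix (Fin n) (Fin n) ℝ) : Prop :=
  ∃ P : Matrix (Fin (n + 1)) (Fin (n + 1)) ℝ, P.PosDef ∧
    (∀ j : Fin n, P 0 j.succ = 0) ∧
    (Dext D).transpose * P = P * Dext D ∧
    ∃ u : Fin (n + 1) → (Fin (n + 1) → ℝ),
      (∀ a b, bip P (u a) (u b) = if a = b then 1 else 0) ∧
      ∃ H : Fin (n + 1) → ℝ,
        (∀ X : Fin (n + 1) → ℝ, bip P H X = Matrix.trace (adM (solvSC D c) X)) ∧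
        ∀ X : Fin (n + 1) → ℝ, X ≠ 0 → ricForm (solvSC D c) P u H X X < 0

/-- The bracket `[e_i,e_j] = v e_k` (and `[e_j,e_i] = −v e_k`) as an element of `V`. -/
def brk {N : ℕ} (i j k : Fin N) (v : ℝ) : SC N :=
  fun p q r =>
    if p = i ∧ q = j ∧ r = k then v else if p = j ∧ q = i ∧ r = k then -v else 0




section Aux39

open Matrix Real

/-- weight vector: diagonal of `F_{ij}^k`. -/
def wt (i j k a : Fin n) : ℝ :=
  (if k = a then 1 else 0) - (if i = a then 1 else 0) - (if j = a then 1 else 0)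

lemma Fwt_eq_diagonal (i j k : Fin n) : Fwt i j k = Matrix.diagonal (wt i j k) := by
  ext a b
  simp only [Fwt, wt, Matrix.diagonal_apply, Matrix.sub_apply, Matrix.single,
    Matrix.of_apply]
  by_cases hab : a = b
  · subst hab; simp [eq_comm]
  · simp [hab]; aesop

lemma lieAct_std (a : Fin n) (μ : SC n) (i j k : Fin n) :
    lieAct (Matrix.single a a 1) μ i j k = wt i j k a * μ i j k := by
  have e1 : (∑ l, Matrix.single a a (1:ℝ) k l * μ i j l)
      = (if k = a then 1 else 0) * μ i j k := by
    by_cases h : k = a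
    · simp [Matrix.single, ite_and, h, Finset.sum_ite_eq]
    · simp [Matrix.single, ite_and, h, Ne.symm h]
  have e2 : (∑ p, Matrix.single a a (1:ℝ) p i * μ p j k)
      = (if i = a then 1 else 0) * μ i j k := by
    by_cases h : i = a
    · simp [Matrix.single, ite_and, h, Finset.sum_ite_eq]
    · simp [Matrix.single, ite_and, h, Ne.symm h]
  have e3 : (∑ p, Matrix.single a a (1:ℝ) p j * μ i p k)
      = (if j = a then 1 else 0) * μ i j k := by
    by_cases h : j = a
    · simp [Matrix.single, ite_and, h, Finset.sum_ite_eq]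
    · simp [Matrix.single, ite_and, h, Ne.symm h]
  simp only [lieAct, e1, e2, e3, wt]
  ring

lemma innerM_std (A : Matrix (Fin n) (Fin n) ℝ) (a : Fin n) :
    innerM A (Matrix.single a a 1) = A a a := by
  simp only [innerM, Matrix.single, Matrix.of_apply, ite_and, mul_ite, mul_one, mul_zero]
  rw [Finset.sum_comm]
  simp [Finset.sum_ite_eq']

lemma std_isSymm (a : Fin n) : (Matrix.single a a (1:ℝ)).IsSymm := by
  ext x y; simp [Matrix.single, Matrix.transpose_apply, and_comm]

lemma innerV_eq (c d : SC n) :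
    innerV c d = ∑ s : Fin n × Fin n × Fin n,
      if s.1 < s.2.1 then c s.1 s.2.1 s.2.2 * d s.1 s.2.1 s.2.2 else 0 := by
  unfold innerV
  rw [Fintype.sum_prod_type]
  refine Finset.sum_congr rfl fun i _ => ?_
  rw [Fintype.sum_prod_type]

/-- `cF μ a = ⟨E_{aa}·μ, μ⟩`. -/
def cF (μ : SC n) (a : Fin n) : ℝ :=
  ∑ s : Fin n × Fin n × Fin n,
    if s.1 < s.2.1 then wt s.1 s.2.1 s.2.2 a * (μ s.1 s.2.1 s.2.2)^2 else 0

lemma cF_eq (μ : SC n) (a : Fin n) :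
    innerV (lieAct (Matrix.single a a 1) μ) μ = cF μ a := by
  rw [innerV_eq]
  refine Finset.sum_congr rfl fun s _ => ?_
  by_cases h : s.1 < s.2.1
  · simp only [h, if_true, lieAct_std]; ring
  · simp [h]

/-- the (unique) diagonal part of the moment map. -/
noncomputable def dm (μ : SC n) : Matrix (Fin n) (Fin n) ℝ :=
  Matrix.diagonal fun a => (innerV μ μ)⁻¹ * cF μ a

lemma diagPart_m_eq {m : SC n → Matrix (Fin n) (Fin n) ℝ} (hm : IsMomentMap m)
    {μ : SC n} (hμ : μ ≠ 0) : diagPart (m μ) = dm μ := by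
  have key : (fun i => m μ i i) = fun a => (innerV μ μ)⁻¹ * cF μ a := by
    funext a
    have h := (hm μ hμ).2 (Matrix.single a a 1) (std_isSymm a)
    rw [innerM_std] at h
    rw [h, cF_eq]
  unfold diagPart dm
  rw [key]

lemma continuous_eval (i j k : Fin n) : Continuous fun μ : SC n => μ i j k :=
  (continuous_apply k).comp ((continuous_apply j).comp (continuous_apply i))

lemma isClosed_antisym : IsClosed {μ : SC n | IsAntisym μ} := by
  have : {μ : SC n | IsAntisym μ}
      = ⋂ i, ⋂ j, ⋂ k, {μ : SC n | μ j i k = - μ i j k} := by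
    ext μ; simp [IsAntisym, Set.mem_iInter]
  rw [this]
  exact isClosed_iInter fun i => isClosed_iInter fun j => isClosed_iInter fun k =>
    isClosed_eq (continuous_eval j i k) (continuous_eval i j k).neg

lemma isClosed_supp (c : SC n) :
    IsClosed {μ : SC n | ∀ i j k, c i j k = 0 → μ i j k = 0} := by
  have : {μ : SC n | ∀ i j k, c i j k = 0 → μ i j k = 0}
      = ⋂ i, ⋂ j, ⋂ k, {μ : SC n | c i j k = 0 → μ i j k = 0} := by
    ext μ; simp [Set.mem_iInter]
  rw [this]
  refine isClosed_iInter fun i => isClosed_iInter fun j => isClosed_iInter fun k => ?_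
  by_cases h : c i j k = 0
  · have : {μ : SC n | c i j k = 0 → μ i j k = 0} = {μ : SC n | μ i j k = 0} := by
      ext μ; simp [h]
    rw [this]
    exact isClosed_eq (continuous_eval i j k) continuous_const
  · have : {μ : SC n | c i j k = 0 → μ i j k = 0} = Set.univ := by
      ext μ; simp [h]
    rw [this]
    exact isClosed_univ

lemma torbit_antisym {c : SC n} (hanti : IsAntisym c) {μ : SC n} (hμ : μ ∈ Torbit c) :
    IsAntisym μ := by
  obtain ⟨d, hd, rfl⟩ := hμ
  intro i j k
  simp only [diagAct, hanti i j k]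
  ring

lemma torbit_supp {c : SC n} {μ : SC n} (hμ : μ ∈ Torbit c) :
    ∀ i j k, c i j k = 0 → μ i j k = 0 := by
  obtain ⟨d, hd, rfl⟩ := hμ
  intro i j k h
  simp [diagAct, h]

lemma closure_antisym {c : SC n} (hanti : IsAntisym c) {μ : SC n}
    (hμ : μ ∈ closure (Torbit c)) : IsAntisym μ :=
  closure_minimal (fun _ h => torbit_antisym hanti h) isClosed_antisym hμ

lemma closure_supp {c : SC n} {μ : SC n} (hμ : μ ∈ closure (Torbit c)) :
    ∀ i j k, c i j k = 0 → μ i j k = 0 :=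
  closure_minimal (fun _ h => torbit_supp h) (isClosed_supp c) hμ

lemma innerV_self_nonneg (μ : SC n) : 0 ≤ innerV μ μ := by
  rw [innerV_eq]
  refine Finset.sum_nonneg fun s _ => ?_
  split_ifs
  · exact mul_self_nonneg _
  · exact le_refl 0

lemma innerV_self_pos {μ : SC n} (hanti : IsAntisym μ) (hμ : μ ≠ 0) :
    0 < innerV μ μ := by
  have ⟨i, j, k, hne⟩ : ∃ i j k, μ i j k ≠ 0 := by
    by_contra h
    push_neg at h
    exact hμ (by funext i j k; exact h i j k)
  have hij : i ≠ j := by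
    rintro rfl
    have := hanti i i k
    have : μ i i k = 0 := by linarith
    exact hne this
  obtain ⟨i', j', k', hlt, hne'⟩ : ∃ i' j' k', i' < j' ∧ μ i' j' k' ≠ 0 := by
    rcases lt_or_gt_of_ne hij with h | h
    · exact ⟨i, j, k, h, hne⟩
    · refine ⟨j, i, k, h, ?_⟩
      rw [hanti i j k]  -- μ j i k = -μ i j k
      simpa using hne
  rw [innerV_eq]
  refine Finset.sum_pos' (fun s _ => ?_) ⟨(i', j', k'), Finset.mem_univ _, ?_⟩
  · split_ifs
    · exact mul_self_nonneg _
    · exact le_refl 0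
  · simp only [hlt, if_true]
    exact mul_self_pos.mpr hne'

end Aux39

section Aux39b

open Matrix Real

lemma smul_apply3 (r : ℝ) (μ : SC n) (i j k : Fin n) : (r • μ) i j k = r * μ i j k := rfl

lemma smul_mem_torbit {c : SC n} {r : ℝ} (hr : 0 < r) {μ : SC n} (hμ : μ ∈ Torbit c) :
    r • μ ∈ Torbit c := by
  obtain ⟨d, hd, rfl⟩ := hμ
  refine ⟨fun i => d i / r, fun i => div_pos (hd i) hr, ?_⟩
  funext i j k
  have hdi := (hd i).ne'
  have hdj := (hd j).ne'
  have hrne := hr.ne'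
  simp only [smul_apply3, diagAct]
  field_simp

lemma smul_mem_closure_torbit {c : SC n} {r : ℝ} (hr : 0 < r) {μ : SC n}
    (hμ : μ ∈ closure (Torbit c)) : r • μ ∈ closure (Torbit c) := by
  have hcont : Continuous fun x : SC n => r • x := continuous_id.const_smul r
  have h1 : r • μ ∈ (fun x : SC n => r • x) '' closure (Torbit c) := ⟨μ, hμ, rfl⟩
  have h2 := image_closure_subset_closure_image (f := fun x : SC n => r • x) (s := Torbit c) hcont
  have h3 : (fun x : SC n => r • x) '' Torbit c ⊆ Torbit c := by
    rintro _ ⟨x, hx, rfl⟩; exact smul_mem_torbit hr hx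
  exact closure_mono h3 (h2 h1)

lemma innerV_smul_self (r : ℝ) (μ : SC n) : innerV (r • μ) (r • μ) = r^2 * innerV μ μ := by
  rw [innerV_eq, innerV_eq, Finset.mul_sum]
  refine Finset.sum_congr rfl fun s _ => ?_
  split_ifs
  · simp only [smul_apply3]; ring
  · simp

lemma cF_smul (r : ℝ) (μ : SC n) (a : Fin n) : cF (r • μ) a = r^2 * cF μ a := by
  unfold cF
  rw [Finset.mul_sum]
  refine Finset.sum_congr rfl fun s _ => ?_
  split_ifs
  · simp only [smul_apply3]; ring
  · simp

lemma dm_smul {r : ℝ} (hr : r ≠ 0) (μ : SC n) : dm (r • μ) = dm μ := by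
  have key : (fun a => (innerV (r • μ) (r • μ))⁻¹ * cF (r • μ) a)
      = fun a => (innerV μ μ)⁻¹ * cF μ a := by
    funext a
    rw [innerV_smul_self, cF_smul, mul_inv]
    have h2 : (r^2)⁻¹ * (r^2) = 1 := inv_mul_cancel₀ (pow_ne_zero 2 hr)
    calc (r ^ 2)⁻¹ * (innerV μ μ)⁻¹ * (r ^ 2 * cF μ a)
        = ((r^2)⁻¹ * (r^2)) * ((innerV μ μ)⁻¹ * cF μ a) := by ring
      _ = (innerV μ μ)⁻¹ * cF μ a := by rw [h2, one_mul]
  unfold dm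
  rw [key]

/-- The moment map's diagonal as a function of `cF` only (valid on the unit sphere). -/
noncomputable def dmS (μ : SC n) : Matrix (Fin n) (Fin n) ℝ := Matrix.diagonal (cF μ)

lemma continuous_cF (a : Fin n) : Continuous fun μ : SC n => cF μ a := by
  unfold cF
  refine continuous_finset_sum _ fun s _ => ?_
  by_cases h : s.1 < s.2.1
  · simp only [h, if_true]
    exact continuous_const.mul ((continuous_eval _ _ _).pow 2)
  · simp only [h, if_false]
    exact continuous_const

lemma continuous_dmS : Continuous fun μ : SC n => dmS μ := by
  unfold dmS
  refine continuous_matrix fun i j => ?_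
  by_cases hij : i = j
  · subst hij
    simp only [Matrix.diagonal_apply_eq]
    exact continuous_cF i
  · simp only [Matrix.diagonal_apply_ne _ hij]
    exact continuous_const

lemma continuous_innerV_self : Continuous fun μ : SC n => innerV μ μ := by
  have h : (fun μ : SC n => innerV μ μ) = fun μ => ∑ s : Fin n × Fin n × Fin n,
      if s.1 < s.2.1 then μ s.1 s.2.1 s.2.2 * μ s.1 s.2.1 s.2.2 else 0 := by
    funext μ; rw [innerV_eq]
  rw [h]
  refine continuous_finset_sum _ fun s _ => ?_
  by_cases hlt : s.1 < s.2.1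
  · simp only [hlt, if_true]
    exact (continuous_eval _ _ _).mul (continuous_eval _ _ _)
  · simp only [hlt, if_false]
    exact continuous_const

/-- the unit sphere slice of the closed orbit. -/
def K1 (c : SC n) : Set (SC n) := closure (Torbit c) ∩ {μ | innerV μ μ = 1}

lemma sq_le_innerV {μ : SC n} (hanti : IsAntisym μ) (i j k : Fin n) :
    μ i j k * μ i j k ≤ innerV μ μ := by
  have key : ∀ i j k : Fin n, i < j → μ i j k * μ i j k ≤ innerV μ μ := by
    intro i j k hlt
    rw [innerV_eq]
    have := Finset.single_le_sum (f := fun s : Fin n × Fin n × Fin n =>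
        if s.1 < s.2.1 then μ s.1 s.2.1 s.2.2 * μ s.1 s.2.1 s.2.2 else 0)
      (fun s _ => by split_ifs; exacts [mul_self_nonneg _, le_refl 0])
      (Finset.mem_univ (i, j, k))
    simpa [hlt] using this
  rcases lt_trichotomy i j with h | h | h
  · exact key i j k h
  · subst h
    have h0 : μ i i k = 0 := by have := hanti i i k; linarith
    rw [h0]
    simpa using innerV_self_nonneg μ
  · have heq : μ i j k * μ i j k = μ j i k * μ j i k := by
      rw [hanti j i k]; ring
    rw [heq]
    exact key j i k h

lemma isCompact_K1 {c : SC n} (hanti : IsAntisym c) : IsCompact (K1 c) := by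
  have hclosed : IsClosed (K1 c) :=
    isClosed_closure.inter (isClosed_eq continuous_innerV_self continuous_const)
  have hsub : K1 c ⊆ Metric.closedBall 0 1 := by
    rintro μ ⟨hμA, hμ1⟩
    have hμanti := closure_antisym hanti hμA
    rw [Metric.mem_closedBall, dist_zero_right]
    refine (pi_norm_le_iff_of_nonneg zero_le_one).mpr fun i => ?_
    refine (pi_norm_le_iff_of_nonneg zero_le_one).mpr fun j => ?_
    refine (pi_norm_le_iff_of_nonneg zero_le_one).mpr fun k => ?_
    rw [Real.norm_eq_abs]
    rw [abs_le_one_iff_mul_self_le_one]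
    calc μ i j k * μ i j k ≤ innerV μ μ := sq_le_innerV hμanti i j k
      _ = 1 := hμ1
  exact (Metric.isCompact_of_isClosed_isBounded hclosed
    (Metric.isBounded_closedBall.subset hsub))

lemma innerV_zero : innerV (0 : SC n) (0 : SC n) = 0 := by
  simp [innerV]

lemma dm_image_eq {c : SC n} (hanti : IsAntisym c) :
    dm '' (closure (Torbit c) \ {0}) = dmS '' K1 c := by
  apply Set.Subset.antisymm
  · rintro _ ⟨μ, ⟨hμA, hμ0'⟩, rfl⟩
    have hμ0 : μ ≠ 0 := hμ0'
    have hpos : 0 < innerV μ μ := innerV_self_pos (closure_antisym hanti hμA) hμ0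
    set r : ℝ := (Real.sqrt (innerV μ μ))⁻¹ with hr_def
    have hsq : 0 < Real.sqrt (innerV μ μ) := Real.sqrt_pos.mpr hpos
    have hr : 0 < r := inv_pos.mpr hsq
    have hμ1A : r • μ ∈ closure (Torbit c) := smul_mem_closure_torbit hr hμA
    have hμ1norm : innerV (r • μ) (r • μ) = 1 := by
      rw [innerV_smul_self, hr_def, inv_pow, Real.sq_sqrt hpos.le]
      exact inv_mul_cancel₀ hpos.ne'
    refine ⟨r • μ, ⟨hμ1A, hμ1norm⟩, ?_⟩
    have : dmS (r • μ) = dm (r • μ) := by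
      unfold dmS dm
      rw [hμ1norm]
      simp
    rw [this, dm_smul hr.ne' μ]
  · rintro _ ⟨μ, ⟨hμA, hμ1⟩, rfl⟩
    have hμ0 : μ ≠ 0 := by
      intro h
      have h1 : innerV μ μ = 1 := hμ1
      rw [h, innerV_zero] at h1
      norm_num at h1
    refine ⟨μ, ⟨hμA, hμ0⟩, ?_⟩
    unfold dmS dm
    rw [hμ1]
    simp

end Aux39b

section Aux39c

open Matrix Real

/-- the support of `c` on the `i<j` part of the basis. -/
noncomputable def Sf (c : SC n) : Finset (Fin n × Fin n × Fin n) :=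
  Finset.univ.filter fun s => s.1 < s.2.1 ∧ c s.1 s.2.1 s.2.2 ≠ 0

lemma Sf_nonempty {c : SC n} (hanti : IsAntisym c) (hc0 : c ≠ 0) : (Sf c).Nonempty := by
  have hpos : 0 < innerV c c := innerV_self_pos hanti hc0
  by_contra h
  rw [Finset.not_nonempty_iff_eq_empty] at h
  have : innerV c c = 0 := by
    rw [innerV_eq]
    refine Finset.sum_eq_zero fun s _ => ?_
    by_cases hlt : s.1 < s.2.1
    · simp only [hlt, if_true]
      by_cases hc : c s.1 s.2.1 s.2.2 = 0
      · rw [hc]; ring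
      · exfalso
        have : s ∈ Sf c := Finset.mem_filter.mpr ⟨Finset.mem_univ _, hlt, hc⟩
        rw [h] at this
        exact absurd this (Finset.notMem_empty s)
    · simp [hlt]
  linarith

lemma sum_sq_Sf {c μ : SC n} (hsupp : ∀ i j k, c i j k = 0 → μ i j k = 0) :
    ∑ s ∈ Sf c, (μ s.1 s.2.1 s.2.2)^2 = innerV μ μ := by
  rw [innerV_eq, Sf, Finset.sum_filter]
  refine Finset.sum_congr rfl fun s _ => ?_
  by_cases hlt : s.1 < s.2.1
  · by_cases hc : c s.1 s.2.1 s.2.2 = 0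
    · simp [hlt, hc, hsupp s.1 s.2.1 s.2.2 hc]
    · simp [hlt, hc]; ring
  · simp [hlt]

lemma sum_sq_smul_Fwt {c μ : SC n} (hsupp : ∀ i j k, c i j k = 0 → μ i j k = 0) :
    ∑ s ∈ Sf c, (μ s.1 s.2.1 s.2.2)^2 • Fwt s.1 s.2.1 s.2.2 = Matrix.diagonal (cF μ) := by
  ext a b
  rw [Matrix.sum_apply]
  by_cases hab : a = b
  · subst hab
    simp only [Matrix.smul_apply, Fwt_eq_diagonal, Matrix.diagonal_apply_eq, smul_eq_mul]
    unfold cF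
    rw [Sf, Finset.sum_filter]
    refine Finset.sum_congr rfl fun s _ => ?_
    by_cases hlt : s.1 < s.2.1
    · by_cases hc : c s.1 s.2.1 s.2.2 = 0
      · simp [hlt, hc, hsupp s.1 s.2.1 s.2.2 hc]
      · simp only [hlt, hc, if_true, ne_eq, not_false_iff, and_self]
        ring
    · simp [hlt]
  · simp only [Matrix.smul_apply, Fwt_eq_diagonal, Matrix.diagonal_apply_ne _ hab, smul_eq_mul,
      mul_zero]
    simp [Finset.sum_const_zero]

lemma dm_eq_centerMass {c μ : SC n} (hantiμ : IsAntisym μ) (hμ0 : μ ≠ 0)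
    (hsupp : ∀ i j k, c i j k = 0 → μ i j k = 0) :
    dm μ = (Sf c).centerMass (fun s => (μ s.1 s.2.1 s.2.2)^2)
      (fun s => Fwt s.1 s.2.1 s.2.2) := by
  rw [Finset.centerMass, sum_sq_Sf hsupp, sum_sq_smul_Fwt hsupp]
  unfold dm
  ext a b
  by_cases hab : a = b
  · subst hab
    simp [Matrix.smul_apply, Matrix.diagonal_apply_eq]
  · simp [Matrix.smul_apply, Matrix.diagonal_apply_ne _ hab]

lemma dm_mem_CH {c : SC n} (hanti : IsAntisym c) {μ : SC n}
    (hμA : μ ∈ closure (Torbit c)) (hμ0 : μ ≠ 0) : dm μ ∈ CHmu c := by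
  have hantiμ := closure_antisym hanti hμA
  have hsupp := closure_supp hμA
  have hpos : 0 < innerV μ μ := innerV_self_pos hantiμ hμ0
  rw [dm_eq_centerMass hantiμ hμ0 hsupp]
  refine Finset.centerMass_mem_convexHull _ (fun s _ => sq_nonneg _) ?_ (fun s hs => ?_)
  · rw [sum_sq_Sf hsupp]
    exact hpos
  · obtain ⟨-, hlt, hc⟩ := Finset.mem_filter.mp hs
    exact ⟨s.1, s.2.1, s.2.2, hlt, hc, rfl⟩

end Aux39c

section Birch39

open Real Filter
open scoped RealInnerProductSpace

set_option maxHeartbeats 1000000 in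
lemma birch {E : Type*} [NormedAddCommGroup E] [InnerProductSpace ℝ E] [FiniteDimensional ℝ E]
    {ι : Type*} (S : Finset ι) (hS : S.Nonempty)
    (w : ι → E) (a τ : ι → ℝ) (ha : ∀ s ∈ S, 0 < a s) (hτ : ∀ s ∈ S, 0 < τ s)
    (hτ1 : ∑ s ∈ S, τ s = 1) :
    ∃ x : E, ∑ s ∈ S, (a s * Real.exp (2 * ⟪w s, x⟫)) •
      (w s - ∑ t ∈ S, τ t • w t) = 0 := by
  classical
  set p : E := ∑ t ∈ S, τ t • w t with hp
  set v : ι → E := fun s => w s - p with hv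
  have hvsum : ∀ x : E, ∑ s ∈ S, τ s * ⟪v s, x⟫ = 0 := by
    intro x
    have h1 : ∑ s ∈ S, τ s * ⟪v s, x⟫ = ⟪∑ s ∈ S, τ s • v s, x⟫ := by
      rw [sum_inner]
      exact Finset.sum_congr rfl fun s _ => (real_inner_smul_left _ _ _).symm
    have h2 : ∑ s ∈ S, τ s • v s = 0 := by
      simp only [hv, smul_sub]
      rw [Finset.sum_sub_distrib, ← Finset.sum_smul, hτ1, one_smul, sub_self]
    rw [h1, h2, inner_zero_left]
  by_cases hdeg : ∀ s ∈ S, v s = 0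
  · refine ⟨0, Finset.sum_eq_zero fun s hs => ?_⟩
    have : w s - p = v s := rfl
    rw [this, hdeg s hs, smul_zero]
  push_neg at hdeg
  obtain ⟨s₀, hs₀S, hs₀⟩ := hdeg
  set W : Submodule ℝ E := Submodule.span ℝ (v '' ↑S) with hW
  have hvW : ∀ s ∈ S, v s ∈ W := fun s hs => Submodule.subset_span ⟨s, hs, rfl⟩
  haveI : Nontrivial W := by
    refine nontrivial_of_ne ⟨v s₀, hvW s₀ hs₀S⟩ 0 ?_
    intro h
    exact hs₀ (congrArg Subtype.val h)
  set Ls : ι → (W →L[ℝ] ℝ) := fun s => (innerSL ℝ (v s)).comp W.subtypeL with hLsdef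
  have hLs : ∀ s (x : W), Ls s x = ⟪v s, (x : E)⟫ := fun _ _ => rfl
  set f : W → ℝ := fun x => ∑ s ∈ S, a s * Real.exp (2 * Ls s x) with hf
  have hfc : Continuous f := by
    refine continuous_finset_sum _ fun s _ => ?_
    exact continuous_const.mul ((Real.continuous_exp).comp
      (continuous_const.mul (Ls s).continuous))
  have horth : ∀ x : W, (∀ s ∈ S, ⟪v s, (x : E)⟫ = 0) → x = 0 := by
    intro x hx
    have hker : Submodule.span ℝ (v '' ↑S) ≤ LinearMap.ker ((innerSL ℝ ((x : E))).toLinearMap) := by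
      refine Submodule.span_le.mpr ?_
      rintro _ ⟨s, hs, rfl⟩
      simp only [SetLike.mem_coe, LinearMap.mem_ker, ContinuousLinearMap.coe_coe,
        innerSL_apply_apply]
      rw [real_inner_comm]
      exact hx s hs
    have hx2 : (x : E) ∈ Submodule.span ℝ (v '' ↑S) := x.2
    have h0 := hker hx2
    simp only [LinearMap.mem_ker, ContinuousLinearMap.coe_coe, innerSL_apply_apply] at h0
    exact Subtype.ext (inner_self_eq_zero.mp h0)
  set g : W → ℝ := fun x => ∑ s ∈ S, max 0 ⟪v s, (x : E)⟫ with hg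
  have hgc : Continuous g := by
    refine continuous_finset_sum _ fun s _ => ?_
    exact continuous_const.max (continuous_const.inner continuous_subtype_val)
  have hgnonneg : ∀ x : W, 0 ≤ g x :=
    fun x => Finset.sum_nonneg fun s _ => le_max_left _ _
  have hgpos : ∀ x : W, x ≠ 0 → 0 < g x := by
    intro x hx
    rcases (hgnonneg x).lt_or_eq with h | h
    · exact h
    exfalso
    apply hx
    apply horth x
    have hallle : ∀ s ∈ S, ⟪v s, (x : E)⟫ ≤ 0 := by
      intro t ht
      have hmax : max 0 ⟪v t, (x : E)⟫ = 0 :=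
        Finset.sum_eq_zero_iff_of_nonneg (fun s _ => le_max_left 0 _) |>.mp h.symm t ht
      by_contra hpos
      push_neg at hpos
      rw [max_eq_right hpos.le] at hmax
      exact hpos.ne' hmax
    have hterm : ∀ t ∈ S, τ t * ⟪v t, (x : E)⟫ = 0 :=
      Finset.sum_eq_zero_iff_of_nonpos
        (fun t ht => (by nlinarith [hτ t ht, hallle t ht] : τ t * ⟪v t, (x : E)⟫ ≤ 0))
        |>.mp (hvsum x)
    intro s hs
    have := hterm s hs
    have hτs := (hτ s hs).ne'
    exact (mul_eq_zero.mp this).resolve_left hτs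
  have hsph : (Metric.sphere (0 : W) 1).Nonempty := NormedSpace.sphere_nonempty.mpr zero_le_one
  obtain ⟨z, hzS, hzmin⟩ := (isCompact_sphere (0 : W) 1).exists_isMinOn hsph hgc.continuousOn
  have hz1 : ‖z‖ = 1 := mem_sphere_zero_iff_norm.mp hzS
  have hzne : z ≠ 0 := by
    intro h; rw [h, norm_zero] at hz1; norm_num at hz1
  set ε : ℝ := g z with hεdef
  have hε : 0 < ε := hgpos z hzne
  have hghom : ∀ (r : ℝ) (x : W), 0 ≤ r → g (r • x) = r * g x := by
    intro r x hr
    simp only [hg]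
    rw [Finset.mul_sum]
    refine Finset.sum_congr rfl fun s _ => ?_
    have hcoe : ((r • x : W) : E) = r • (x : E) := rfl
    rw [hcoe, real_inner_smul_right]
    rw [mul_max_of_nonneg _ _ hr, mul_zero]
  have hgx : ∀ x : W, ε * ‖x‖ ≤ g x := by
    intro x
    rcases eq_or_ne x 0 with rfl | hx
    · simp [hg]
    · have hnx : (0:ℝ) < ‖x‖ := norm_pos_iff.mpr hx
      set u : W := ‖x‖⁻¹ • x with hu
      have hu1 : ‖u‖ = 1 := by
        rw [hu, norm_smul, norm_inv, norm_norm, inv_mul_cancel₀ hnx.ne']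
      have husph : u ∈ Metric.sphere (0 : W) 1 := mem_sphere_zero_iff_norm.mpr hu1
      have h1 : ε ≤ g u := hzmin husph
      have h2 : g x = ‖x‖ * g u := by
        rw [← hghom ‖x‖ u hnx.le, hu, smul_smul, mul_inv_cancel₀ hnx.ne', one_smul]
      rw [h2, mul_comm ε ‖x‖]
      exact mul_le_mul_of_nonneg_left h1 hnx.le
  obtain ⟨s₁, hs₁S, hs₁min⟩ := S.exists_min_image a hS
  set amin : ℝ := a s₁ with hamin
  have haminpos : 0 < amin := ha s₁ hs₁S
  have hcard : (0:ℝ) < S.card := by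
    exact_mod_cast Finset.card_pos.mpr hS
  set κ : ℝ := 2 * ε / S.card with hκ
  have hκpos : 0 < κ := div_pos (by linarith) hcard
  have hfb : ∀ x : W, amin * Real.exp (κ * ‖x‖) ≤ f x := by
    intro x
    obtain ⟨s₀', hs₀'S, hmax⟩ := S.exists_max_image (fun s => ⟪v s, (x : E)⟫) hS
    have h1 : 0 ≤ ⟪v s₀', (x : E)⟫ := by
      by_contra hneg
      push_neg at hneg
      have hlt : ∑ s ∈ S, τ s * ⟪v s, (x : E)⟫ < 0 := by
        refine Finset.sum_neg (fun t ht => ?_) hS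
        exact mul_neg_of_pos_of_neg (hτ t ht) (lt_of_le_of_lt (hmax t ht) hneg)
      rw [hvsum x] at hlt
      norm_num at hlt
    have h2 : g x ≤ S.card * ⟪v s₀', (x : E)⟫ := by
      calc g x ≤ ∑ _s ∈ S, ⟪v s₀', (x : E)⟫ := by
            refine Finset.sum_le_sum fun t ht => ?_
            exact max_le h1 (hmax t ht)
        _ = S.card * ⟪v s₀', (x : E)⟫ := by
            rw [Finset.sum_const, nsmul_eq_mul]
    have h3 : κ * ‖x‖ ≤ 2 * ⟪v s₀', (x : E)⟫ := by
      have h4 : ε * ‖x‖ ≤ S.card * ⟪v s₀', (x : E)⟫ := le_trans (hgx x) h2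
      rw [hκ]
      rw [div_mul_eq_mul_div, div_le_iff₀ hcard]
      calc 2 * ε * ‖x‖ = 2 * (ε * ‖x‖) := by ring
        _ ≤ 2 * (S.card * ⟪v s₀', (x : E)⟫) := by linarith
        _ = 2 * ⟪v s₀', (x : E)⟫ * S.card := by ring
    calc amin * Real.exp (κ * ‖x‖) ≤ a s₀' * Real.exp (2 * ⟪v s₀', (x : E)⟫) := by
          refine mul_le_mul (hs₁min s₀' hs₀'S) (Real.exp_le_exp.mpr h3) (Real.exp_pos _).le
            (ha s₀' hs₀'S).le
      _ = a s₀' * Real.exp (2 * Ls s₀' x) := by rw [hLs]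
      _ ≤ f x := by
          have hle : a s₀' * Real.exp (2 * Ls s₀' x)
              ≤ ∑ s ∈ S, a s * Real.exp (2 * Ls s x) :=
            Finset.single_le_sum (f := fun t => a t * Real.exp (2 * Ls t x))
              (fun t ht => mul_nonneg (ha t ht).le (Real.exp_pos _).le) hs₀'S
          exact hle
  have htend : Filter.Tendsto f (Filter.cocompact W) Filter.atTop := by
    refine tendsto_atTop_mono hfb ?_
    have h1 : Filter.Tendsto (fun r : ℝ => amin * Real.exp (κ * r)) Filter.atTop Filter.atTop := by
      refine Filter.Tendsto.const_mul_atTop haminpos ?_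
      exact Real.tendsto_exp_atTop.comp (Filter.Tendsto.const_mul_atTop hκpos tendsto_id)
    exact h1.comp tendsto_norm_cocompact_atTop
  obtain ⟨x₀, hx₀⟩ := hfc.exists_forall_le htend
  set F' : W →L[ℝ] ℝ :=
    ∑ s ∈ S, (a s * Real.exp (2 * Ls s x₀) * 2) • Ls s with hF'
  have hfd : HasFDerivAt f F' x₀ := by
    rw [hf, hF']
    refine HasFDerivAt.fun_sum fun s _ => ?_
    have h1 : HasFDerivAt (fun x : W => 2 * Ls s x) ((2:ℝ) • Ls s) x₀ :=
      (Ls s).hasFDerivAt.const_mul 2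
    have h2 := h1.exp
    have h3 := h2.const_mul (a s)
    convert h3 using 1
    · rfl
    simp only [smul_smul, mul_assoc]
  have hmin : IsLocalMin f x₀ := Filter.Eventually.of_forall fun y => hx₀ y
  have hzero : F' = 0 := hmin.hasFDerivAt_eq_zero hfd
  set b : ι → ℝ := fun s => a s * Real.exp (2 * Ls s x₀) with hb
  set u : E := ∑ s ∈ S, b s • v s with hu
  have huW : u ∈ W := Submodule.sum_smul_mem W b fun s hs => hvW s hs
  have heval : (0:ℝ) = ∑ s ∈ S, (b s * 2) * ⟪v s, u⟫ := by
    have h0 := congrArg (fun T : W →L[ℝ] ℝ => T ⟨u, huW⟩) hzero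
    simp only [ContinuousLinearMap.zero_apply] at h0
    rw [hF'] at h0
    rw [ContinuousLinearMap.sum_apply] at h0
    calc (0:ℝ) = ∑ s ∈ S, ((a s * Real.exp (2 * Ls s x₀) * 2) • Ls s) ⟨u, huW⟩ := h0.symm
      _ = ∑ s ∈ S, (b s * 2) * ⟪v s, u⟫ := by
          refine Finset.sum_congr rfl fun s _ => ?_
          rw [ContinuousLinearMap.smul_apply, smul_eq_mul]
          have hbs : b s = a s * Real.exp (2 * Ls s x₀) := by simp only [hb]
          rw [hbs]
          congr 1
  have hinner : ⟪u, u⟫ = ∑ s ∈ S, b s * ⟪v s, u⟫ := by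
    rw [hu, sum_inner]
    refine Finset.sum_congr rfl fun s _ => ?_
    rw [real_inner_smul_left]
  have huzero : u = 0 := by
    rw [← @inner_self_eq_zero ℝ]
    have h5 : ∑ s ∈ S, (b s * 2) * ⟪v s, u⟫ = 2 * ∑ s ∈ S, b s * ⟪v s, u⟫ := by
      rw [Finset.mul_sum]; exact Finset.sum_congr rfl fun s _ => by ring
    rw [h5] at heval
    rw [hinner]
    linarith
  refine ⟨(x₀ : E), ?_⟩
  have hsplit : ∀ s ∈ S, a s * Real.exp (2 * ⟪w s, (x₀ : E)⟫)
      = Real.exp (2 * ⟪p, (x₀ : E)⟫) * b s := by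
    intro s _
    have hws : ⟪ w s, (x₀ : E)⟫ = ⟪ v s, (x₀ : E)⟫ + ⟪ p, (x₀ : E)⟫ := by
      have hw : w s = v s + p := by simp [hv]
      rw [hw, inner_add_left]
    have hbs : b s = a s * Real.exp (2 * ⟪ v s, (x₀ : E)⟫) := by
      simp only [hb, hLs]
    rw [hws, mul_add, Real.exp_add, hbs]
    ring
  calc ∑ s ∈ S, (a s * Real.exp (2 * ⟪w s, (x₀ : E)⟫)) • (w s - p)
      = ∑ s ∈ S, (Real.exp (2 * ⟪p, (x₀ : E)⟫) * b s) • v s := by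
        refine Finset.sum_congr rfl fun s hs => ?_
        rw [hsplit s hs]
    _ = Real.exp (2 * ⟪p, (x₀ : E)⟫) • u := by
        rw [hu, Finset.smul_sum]
        exact Finset.sum_congr rfl fun s _ => (smul_smul _ _ _).symm
    _ = 0 := by rw [huzero, smul_zero]

end Birch39

section Aux39d

open Real Filter Matrix
open scoped RealInnerProductSpace

lemma cF_Sf {c μ : SC n} (hsupp : ∀ i j k, c i j k = 0 → μ i j k = 0) (a : Fin n) :
    cF μ a = ∑ s ∈ Sf c, wt s.1 s.2.1 s.2.2 a * (μ s.1 s.2.1 s.2.2)^2 := by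
  unfold cF
  rw [Sf, Finset.sum_filter]
  refine Finset.sum_congr rfl fun s _ => ?_
  by_cases hlt : s.1 < s.2.1
  · by_cases hc : c s.1 s.2.1 s.2.2 = 0
    · simp [hlt, hc, hsupp s.1 s.2.1 s.2.2 hc]
    · simp [hlt, hc]
  · simp [hlt]

lemma sum_smul_Fwt_diagonal (τ : Fin n × Fin n × Fin n → ℝ) (c : SC n) :
    ∑ s ∈ Sf c, τ s • Fwt s.1 s.2.1 s.2.2
      = Matrix.diagonal (fun a => ∑ s ∈ Sf c, τ s * wt s.1 s.2.1 s.2.2 a) := by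
  ext a b
  rw [Matrix.sum_apply]
  by_cases hab : a = b
  · subst hab
    simp [Fwt_eq_diagonal, Matrix.smul_apply, Matrix.diagonal_apply_eq]
  · simp [Fwt_eq_diagonal, Matrix.smul_apply, Matrix.diagonal_apply_ne _ hab]

lemma inner_wE (i j k : Fin n) (x : EuclideanSpace ℝ (Fin n)) :
    ⟪((WithLp.equiv 2 (Fin n → ℝ)).symm (wt i j k) : EuclideanSpace ℝ (Fin n)), x⟫
      = x k - x i - x j := by
  rw [PiLp.inner_apply]
  simp only [WithLp.equiv_symm_apply, PiLp.toLp_apply, RCLike.inner_apply, conj_trivial]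
  have key : ∀ a : Fin n, wt i j k a * x a
      = (if k = a then x a else 0) - (if i = a then x a else 0)
        - (if j = a then x a else 0) := by
    intro a
    unfold wt
    split_ifs <;> ring
  rw [Finset.sum_congr rfl fun a _ => (mul_comm _ _).trans (key a)]
  rw [Finset.sum_sub_distrib, Finset.sum_sub_distrib]
  rw [Finset.sum_ite_eq, Finset.sum_ite_eq, Finset.sum_ite_eq]
  simp

lemma pos_comb_mem {c : SC n} (hanti : IsAntisym c) (hc0 : c ≠ 0)
    {τ : Fin n × Fin n × Fin n → ℝ} (hτ : ∀ s ∈ Sf c, 0 < τ s)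
    (hτ1 : ∑ s ∈ Sf c, τ s = 1) :
    ∃ μ, (μ ∈ closure (Torbit c) ∧ μ ≠ 0) ∧
      dm μ = ∑ s ∈ Sf c, τ s • Fwt s.1 s.2.1 s.2.2 := by
  classical
  set wE : Fin n × Fin n × Fin n → EuclideanSpace ℝ (Fin n) :=
    fun s => (WithLp.equiv 2 (Fin n → ℝ)).symm (wt s.1 s.2.1 s.2.2) with hwE
  set aw : Fin n × Fin n × Fin n → ℝ := fun s => (c s.1 s.2.1 s.2.2)^2 with haw
  have haw0 : ∀ s ∈ Sf c, 0 < aw s := by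
    intro s hs
    have hc := (Finset.mem_filter.mp hs).2.2
    exact lt_of_le_of_ne (sq_nonneg _) (Ne.symm (pow_ne_zero 2 hc))
  obtain ⟨x, hx⟩ := birch (Sf c) (Sf_nonempty hanti hc0) wE aw τ haw0 hτ hτ1
  set d : Fin n → ℝ := fun i => Real.exp (x i) with hd
  have hdpos : ∀ i, 0 < d i := fun i => Real.exp_pos _
  set μ := diagAct d c with hμ
  have hμT : μ ∈ Torbit c := ⟨d, hdpos, rfl⟩
  have hμA : μ ∈ closure (Torbit c) := subset_closure hμT
  have hsupp : ∀ i j k, c i j k = 0 → μ i j k = 0 := torbit_supp hμT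
  have hμ0 : μ ≠ 0 := by
    obtain ⟨s₀, hs₀⟩ := Sf_nonempty hanti hc0
    have hcne := (Finset.mem_filter.mp hs₀).2.2
    intro h
    have h0 : μ s₀.1 s₀.2.1 s₀.2.2 = 0 := by rw [h]; rfl
    rw [hμ] at h0
    simp only [diagAct] at h0
    rcases mul_eq_zero.mp h0 with h' | h'
    · exact div_ne_zero (hdpos _).ne' (mul_pos (hdpos _) (hdpos _)).ne' h'
    · exact hcne h'
  have hcoeff : ∀ s : Fin n × Fin n × Fin n,
      (μ s.1 s.2.1 s.2.2)^2 = aw s * Real.exp (2 * ⟪wE s, x⟫) := by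
    intro s
    have hip : ⟪wE s, x⟫ = x s.2.2 - x s.1 - x s.2.1 := inner_wE _ _ _ x
    have hμs : μ s.1 s.2.1 s.2.2
        = Real.exp (x s.2.2 - x s.1 - x s.2.1) * c s.1 s.2.1 s.2.2 := by
      rw [hμ]
      simp only [diagAct, hd]
      rw [Real.exp_sub, Real.exp_sub, div_div]
    have hsq : Real.exp (x s.2.2 - x s.1 - x s.2.1) ^ 2
        = Real.exp (2 * (x s.2.2 - x s.1 - x s.2.1)) := by
      rw [sq, ← Real.exp_add]; ring_nf
    rw [hμs, hip, mul_pow, hsq, haw]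
    ring
  set B : Fin n × Fin n × Fin n → ℝ := fun s => aw s * Real.exp (2 * ⟪wE s, x⟫) with hB
  have hBpos : ∀ s ∈ Sf c, 0 < B s := fun s hs => mul_pos (haw0 s hs) (Real.exp_pos _)
  have hSB : innerV μ μ = ∑ s ∈ Sf c, B s := by
    rw [← sum_sq_Sf (c := c) hsupp]
    exact Finset.sum_congr rfl fun s _ => hcoeff s
  have hSBpos : 0 < ∑ s ∈ Sf c, B s := Finset.sum_pos hBpos (Sf_nonempty hanti hc0)
  have hps : ∑ s ∈ Sf c, B s • wE s
      = (∑ s ∈ Sf c, B s) • (∑ t ∈ Sf c, τ t • wE t) := by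
    have h1 : ∑ s ∈ Sf c, B s • (wE s - ∑ t ∈ Sf c, τ t • wE t) = 0 := hx
    have h2 : ∑ s ∈ Sf c, B s • (wE s - ∑ t ∈ Sf c, τ t • wE t)
        = ∑ s ∈ Sf c, B s • wE s
          - (∑ s ∈ Sf c, B s) • (∑ t ∈ Sf c, τ t • wE t) := by
      rw [Finset.sum_smul]
      rw [← Finset.sum_sub_distrib]
      exact Finset.sum_congr rfl fun s _ => smul_sub _ _ _
    rw [h2] at h1
    exact sub_eq_zero.mp h1
  have hcoord : ∀ a : Fin n, ∑ s ∈ Sf c, B s * wt s.1 s.2.1 s.2.2 a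
      = (∑ s ∈ Sf c, B s) * (∑ s ∈ Sf c, τ s * wt s.1 s.2.1 s.2.2 a) := by
    intro a
    have hproj : ∀ s : Fin n × Fin n × Fin n,
        EuclideanSpace.proj a (wE s) = wt s.1 s.2.1 s.2.2 a := by
      intro s
      rw [hwE]
      simp [EuclideanSpace.proj, PiLp.proj_apply, WithLp.equiv_symm_apply, PiLp.toLp_apply]
    have h3 := congrArg (fun z : EuclideanSpace ℝ (Fin n) => EuclideanSpace.proj a z) hps
    simp only [map_sum, _root_.map_smul, smul_eq_mul, hproj] at h3
    exact h3
  refine ⟨μ, ⟨hμA, hμ0⟩, ?_⟩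
  rw [sum_smul_Fwt_diagonal]
  unfold dm
  refine congrArg Matrix.diagonal (funext fun a => ?_)
  rw [hSB, cF_Sf hsupp a]
  have h4 : ∑ s ∈ Sf c, wt s.1 s.2.1 s.2.2 a * (μ s.1 s.2.1 s.2.2)^2
      = ∑ s ∈ Sf c, B s * wt s.1 s.2.1 s.2.2 a := by
    refine Finset.sum_congr rfl fun s _ => ?_
    rw [hcoeff s]
    ring
  rw [h4, hcoord a, ← mul_assoc, inv_mul_cancel₀ hSBpos.ne', one_mul]

end Aux39d

section Aux39e

open Matrix Real Filter Topology

lemma CHmu_eq_finset (c : SC n) :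
    CHmu c = convexHull ℝ ↑((Sf c).image (fun s => Fwt s.1 s.2.1 s.2.2)) := by
  unfold CHmu
  congr 1
  ext M
  simp only [Finset.coe_image, Set.mem_image, Finset.mem_coe, Sf, Finset.mem_filter,
    Finset.mem_univ, true_and, Set.mem_setOf_eq]
  constructor
  · rintro ⟨i, j, k, hlt, hc, rfl⟩
    exact ⟨(i, j, k), ⟨hlt, hc⟩, rfl⟩
  · rintro ⟨s, ⟨hlt, hc⟩, rfl⟩
    exact ⟨s.1, s.2.1, s.2.2, hlt, hc, rfl⟩

lemma exists_weights {c : SC n} {p : Matrix (Fin n) (Fin n) ℝ} (hp : p ∈ CHmu c) :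
    ∃ τ : Fin n × Fin n × Fin n → ℝ, (∀ s ∈ Sf c, 0 ≤ τ s) ∧ (∑ s ∈ Sf c, τ s = 1) ∧
      ∑ s ∈ Sf c, τ s • Fwt s.1 s.2.1 s.2.2 = p := by
  classical
  rw [CHmu_eq_finset, Finset.convexHull_eq] at hp
  obtain ⟨wY, hw0, hw1, hwc⟩ := hp
  set F : (Fin n × Fin n × Fin n) → Matrix (Fin n) (Fin n) ℝ :=
    fun s => Fwt s.1 s.2.1 s.2.2 with hF
  set τ : Fin n × Fin n × Fin n → ℝ :=
    fun s => wY (F s) / ((Sf c).filter (fun t => F t = F s)).card with hτ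
  have hmaps : ∀ s ∈ Sf c, F s ∈ (Sf c).image F := fun s hs => Finset.mem_image_of_mem F hs
  have hfibsum : ∀ z ∈ (Sf c).image F,
      ∑ s ∈ (Sf c).filter (fun t => F t = z), τ s = wY z := by
    intro z hz
    obtain ⟨s₀, hs₀S, hs₀z⟩ := Finset.mem_image.mp hz
    have hne : (((Sf c).filter fun t => F t = z)).Nonempty :=
      ⟨s₀, Finset.mem_filter.mpr ⟨hs₀S, hs₀z⟩⟩
    have hcardpos : (0:ℝ) < (((Sf c).filter fun t => F t = z)).card := by
      exact_mod_cast Finset.card_pos.mpr hne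
    have hconst : ∀ s ∈ (Sf c).filter (fun t => F t = z),
        τ s = wY z / (((Sf c).filter fun t => F t = z)).card := by
      intro s hs
      obtain ⟨hsS, hsz⟩ := Finset.mem_filter.mp hs
      rw [hτ]
      simp only
      rw [hsz]
    rw [Finset.sum_congr rfl hconst, Finset.sum_const, nsmul_eq_mul]
    field_simp
  refine ⟨τ, ?_, ?_, ?_⟩
  · intro s hs
    rw [hτ]
    exact div_nonneg (hw0 _ (hmaps s hs)) (Nat.cast_nonneg _)
  · rw [← Finset.sum_fiberwise_of_maps_to hmaps τ]
    rw [← hw1]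
    exact Finset.sum_congr rfl hfibsum
  · have hcm : ∑ y ∈ (Sf c).image F, wY y • y = p := by
      rw [← hwc, Finset.centerMass_eq_of_sum_1 _ id hw1]
      rfl
    rw [← Finset.sum_fiberwise_of_maps_to hmaps (fun s => τ s • F s), ← hcm]
    refine Finset.sum_congr rfl fun z hz => ?_
    have hzz : ∀ s ∈ (Sf c).filter (fun t => F t = z), τ s • F s = τ s • z := by
      intro s hs
      rw [(Finset.mem_filter.mp hs).2]
    rw [Finset.sum_congr rfl hzz, ← Finset.sum_smul, hfibsum z hz]

lemma CH_subset_image {c : SC n} (hanti : IsAntisym c) (hc0 : c ≠ 0) :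
    CHmu c ⊆ dmS '' K1 c := by
  intro p hp
  obtain ⟨τ₀, hτ₀0, hτ₀1, hτ₀c⟩ := exists_weights hp
  have hclosed : IsClosed (dmS '' K1 c) := ((isCompact_K1 hanti).image continuous_dmS).isClosed
  have hNnat : 0 < (Sf c).card := Finset.card_pos.mpr (Sf_nonempty hanti hc0)
  set N : ℝ := ((Sf c).card : ℝ) with hN
  have hNpos : 0 < N := Nat.cast_pos.mpr hNnat
  set bary : Matrix (Fin n) (Fin n) ℝ := ∑ s ∈ Sf c, (N⁻¹ : ℝ) • Fwt s.1 s.2.1 s.2.2 with hbary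
  have hmem : ∀ mth : ℕ,
      ((1 - 1/((mth:ℝ)+1)) • p + (1/((mth:ℝ)+1)) • bary) ∈ dmS '' K1 c := by
    intro mth
    set θ : ℝ := 1/((mth:ℝ)+1) with hθ
    have hm1 : (0:ℝ) < (mth:ℝ) + 1 := by positivity
    have hθ0 : 0 < θ := by rw [hθ]; positivity
    have hθ1 : θ ≤ 1 := by
      rw [hθ, div_le_one hm1]
      linarith [Nat.cast_nonneg (α := ℝ) mth]
    set τ : Fin n × Fin n × Fin n → ℝ := fun s => (1 - θ) * τ₀ s + θ * N⁻¹ with hτ'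
    have hτpos : ∀ s ∈ Sf c, 0 < τ s := fun s hs =>
      add_pos_of_nonneg_of_pos (mul_nonneg (by linarith) (hτ₀0 s hs))
        (mul_pos hθ0 (inv_pos.mpr hNpos))
    have hτsum : ∑ s ∈ Sf c, τ s = 1 := by
      rw [hτ']
      rw [Finset.sum_add_distrib, ← Finset.mul_sum, ← Finset.mul_sum, hτ₀1]
      rw [Finset.sum_const, nsmul_eq_mul, ← hN, mul_inv_cancel₀ hNpos.ne']
      ring
    obtain ⟨μ', ⟨hA, h0⟩, hdm⟩ := pos_comb_mem hanti hc0 hτpos hτsum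
    have hsplit : ∑ s ∈ Sf c, τ s • Fwt s.1 s.2.1 s.2.2 = (1-θ) • p + θ • bary := by
      rw [hτ']
      simp only [add_smul]
      rw [Finset.sum_add_distrib]
      congr 1
      · rw [← hτ₀c, Finset.smul_sum]
        exact Finset.sum_congr rfl fun s _ => (mul_smul _ _ _)
      · rw [hbary, Finset.smul_sum]
        exact Finset.sum_congr rfl fun s _ => (mul_smul _ _ _)
    have hmem' : dm μ' ∈ dmS '' K1 c := by
      rw [← dm_image_eq hanti]
      exact ⟨μ', ⟨hA, by simpa using h0⟩, rfl⟩
    rw [hdm, hsplit] at hmem'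
    exact hmem'
  have htend : Tendsto
      (fun mth : ℕ => ((1 - 1/((mth:ℝ)+1)) • p + (1/((mth:ℝ)+1)) • bary)) atTop (𝓝 p) := by
    have h1 : Tendsto (fun mth : ℕ => 1/((mth:ℝ)+1)) atTop (𝓝 (0:ℝ)) :=
      tendsto_one_div_add_atTop_nhds_zero_nat
    have h2 : Continuous fun t : ℝ => (1 - t) • p + t • bary :=
      ((continuous_const.sub continuous_id).smul continuous_const).add
        (continuous_id.smul continuous_const)
    have h3 := (h2.tendsto 0).comp h1
    simp only [Function.comp_def] at h3
    simpa using h3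
  exact hclosed.mem_of_tendsto htend (Filter.Eventually.of_forall hmem)

end Aux39e

/-- Lemma 3.9 (mtoro): `Diag(m(closure(T·μ) ∖ {0})) = CH_μ`. -/
theorem statement3 {n : ℕ} (c : SC n) (hanti : IsAntisym c) (hc0 : c ≠ 0)
    (m : SC n → Matrix (Fin n) (Fin n) ℝ) (hm : IsMomentMap m) :
    diagPart '' (m '' (closure (Torbit c) \ {0})) = CHmu c := by
  have h1 : diagPart '' (m '' (closure (Torbit c) \ {0}))
      = dm '' (closure (Torbit c) \ {0}) := by
    rw [← Set.image_comp]
    refine Set.image_congr fun μ hμ => ?_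
    have hμ0 : μ ≠ 0 := by simpa using hμ.2
    exact diagPart_m_eq hm hμ0
  rw [h1, dm_image_eq hanti]
  apply Set.Subset.antisymm
  · rw [← dm_image_eq hanti]
    rintro _ ⟨μ, ⟨hA, h0⟩, rfl⟩
    exact dm_mem_CH hanti hA (by simpa using h0)
  · exact CH_subset_image hanti hc0

end RNPaper
end

section
/- If 𝔫 is a nilpotent Lie algebra over ℝ endowed with a nice basis, then for every derivation D of 𝔫, the linear map Diag(D) given by the diagonal part of the matrix of D in that basis is again a derivation of 𝔫. -/
open scoped BigOperators

namespace RNPaper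

variable {n : ℕ}

lemma br_single_single {n : ℕ} (c : SC n) (i j : Fin n) :
    br c (Pi.single i 1) (Pi.single j 1) = fun m => c i j m := by
  funext m
  simp [br, Pi.single_apply, ite_mul, Finset.sum_ite_eq']

lemma key_nice {n : ℕ} (c : SC n) (hA : IsAntisym c) (hnice : IsNice c)
    (D : Matrix (Fin n) (Fin n) ℝ) (hD : IsDeriv c D)
    (i j k : Fin n) (h : c i j k ≠ 0) : D k k = D i i + D j j := by
  have hij : i ≠ j := by
    intro e
    subst e
    have h2 := hA i i k
    have : c i i k = 0 := by linarith
    exact h this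
  have hDij := congrFun (hD (Pi.single i 1) (Pi.single j 1)) k
  rw [br_single_single] at hDij
  have hx : D.mulVec (Pi.single i 1) = fun p => D p i := by
    funext p
    simp [Matrix.mulVec, dotProduct, Pi.single_apply, mul_ite, Finset.sum_ite_eq']
  have hy : D.mulVec (Pi.single j 1) = fun p => D p j := by
    funext p
    simp [Matrix.mulVec, dotProduct, Pi.single_apply, mul_ite, Finset.sum_ite_eq']
  rw [hx, hy] at hDij
  -- LHS: ∑ l, D k l * c i j l = D k k * c i j k
  have hL : D.mulVec (fun m => c i j m) k = D k k * c i j k := by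
    simp only [Matrix.mulVec, dotProduct]
    apply Finset.sum_eq_single k
    · intro l _ hl
      by_cases hc : c i j l = 0
      · simp [hc]
      · exact absurd (hnice.1 i j l k hc h) hl
    · simp
  -- first RHS: ∑ p ∑ q, D p i * (single j 1 q) * c p q k = D i i * c i j k
  have hR1 : br c (fun p => D p i) (Pi.single j 1) k = D i i * c i j k := by
    simp only [br, Pi.single_apply, mul_ite, mul_one, mul_zero, ite_mul, zero_mul,
      Finset.sum_ite_eq', Finset.mem_univ, if_true]
    apply Finset.sum_eq_single i
    · intro p _ hp
      by_cases hc : c p j k = 0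
      · simp [hc]
      · exfalso
        rcases hnice.2 i j p j k h hc with heq | hdis
        · have : i ∈ ({p, j} : Finset (Fin n)) := by rw [← heq]; simp
          rcases Finset.mem_insert.mp this with h1 | h1
          · exact hp h1.symm
          · exact hij (Finset.mem_singleton.mp h1)
        · exact (Finset.disjoint_left.mp hdis (by simp : j ∈ ({i, j} : Finset (Fin n))))
            (by simp)
    · simp
  have hR2 : br c (Pi.single i 1) (fun p => D p j) k = D j j * c i j k := by
    simp only [br, Pi.single_apply, mul_ite, mul_one, mul_zero, ite_mul, zero_mul, one_mul,
      Finset.sum_ite_eq', Finset.mem_univ, if_true]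
    rw [Finset.sum_comm]
    simp only [Finset.sum_ite_eq', Finset.mem_univ, if_true]
    apply Finset.sum_eq_single j
    · intro q _ hq
      by_cases hc : c i q k = 0
      · simp [hc]
      · exfalso
        rcases hnice.2 i j i q k h hc with heq | hdis
        · have : j ∈ ({i, q} : Finset (Fin n)) := by rw [← heq]; simp
          rcases Finset.mem_insert.mp this with h1 | h1
          · exact hij h1.symm
          · exact hq (Finset.mem_singleton.mp h1).symm
        · exact (Finset.disjoint_left.mp hdis (by simp : i ∈ ({i, j} : Finset (Fin n))))
            (by simp)
    · simp
  rw [hL] at hDij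
  rw [Pi.add_apply, hR1, hR2] at hDij
  have := mul_right_cancel₀ h (by linarith : D k k * c i j k = (D i i + D j j) * c i j k)
  exact this

/-- Corollary 3.16 (niceD): for a nilpotent Lie algebra with a nice basis, the
diagonal part of any derivation is again a derivation. -/
theorem statement7 {n : ℕ} (c : SC n) (hLie : IsNilpotentLie c) (hnice : IsNice c)
    (D : Matrix (Fin n) (Fin n) ℝ) (hD : IsDeriv c D) :
    IsDeriv c (diagPart D) := by
  obtain ⟨hA, hJ, hN⟩ := hLie
  have hkey := key_nice c hA hnice D hD
  intro x y
  funext k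
  have hx : (diagPart D).mulVec x = fun p => D p p * x p := by
    funext p; exact Matrix.mulVec_diagonal _ _ _
  have hy : (diagPart D).mulVec y = fun p => D p p * y p := by
    funext p; exact Matrix.mulVec_diagonal _ _ _
  have hL : (diagPart D).mulVec (br c x y) k = D k k * br c x y k :=
    Matrix.mulVec_diagonal _ _ _
  rw [hL, hx, hy]
  simp only [br, Pi.add_apply, Finset.mul_sum, ← Finset.sum_add_distrib]
  apply Finset.sum_congr rfl
  intro p _
  apply Finset.sum_congr rfl
  intro q _
  by_cases hc : c p q k = 0
  · simp [hc]
  · rw [hkey p q k hc]; ring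

end RNPaper
end

section
/- Let 𝔫 be the 3-dimensional Heisenberg Lie algebra with basis {e₁,e₂,e₃} and Lie bracket [e₁,e₂] = e₃. Then: (a) the derivations of 𝔫 which are diagonal in this basis are exactly the maps Diag(d₁,d₂,d₁+d₂), d₁,d₂ ∈ ℝ; (b) a diagonal derivation D = Diag(d₁,d₂,d₁+d₂) with tr D > 0 is Ricci negative if and only if 2d₁+d₂ > 0 and d₁+2d₂ > 0. -/
open scoped BigOperators

namespace RNPaper

variable {n : ℕ}

/-- The 3-dimensional Heisenberg Lie algebra: `[e₁,e₂] = e₃`. -/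
def heis3 : SC 3 := brk 0 1 2 1

lemma br_heis3 (x y : Fin 3 → ℝ) :
    br heis3 x y = ![0, 0, x 0 * y 1 - x 1 * y 0] := by
  funext k
  fin_cases k <;>
    simp [br, heis3, brk, Fin.sum_univ_three] <;> ring

lemma partA (D : Matrix (Fin 3) (Fin 3) ℝ) (hD : D.IsDiag) :
    IsDeriv heis3 D ↔ ∃ d1 d2 : ℝ, D = Matrix.diagonal ![d1, d2, d1 + d2] := by
  constructor
  · intro h
    refine ⟨D 0 0, D 1 1, ?_⟩
    have h22 : D 2 2 = D 0 0 + D 1 1 := by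
      have := congrFun (h (fun i => if i = 0 then 1 else 0) (fun i => if i = 1 then 1 else 0)) 2
      simp [br_heis3, Matrix.mulVec, dotProduct, Fin.sum_univ_three] at this
      have h01 : D 0 1 = 0 := hD (by decide)
      have h10 : D 1 0 = 0 := hD (by decide)
      have h20 : D 2 0 = 0 := hD (by decide)
      have h21 : D 2 1 = 0 := hD (by decide)
      -- this : ?
      linarith [this]
    funext i j
    fin_cases i <;> fin_cases j <;>
      simp [Matrix.diagonal_apply, h22] <;>
      first
        | rfl
        | (exact hD (by decide))
  · rintro ⟨d1, d2, rfl⟩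
    intro x y
    funext k
    have hb := br_heis3
    fin_cases k <;>
      simp [br_heis3, Matrix.mulVec_diagonal] <;> ring
@[simp] lemma fc4_1 {α : Sort*} (x : α) (f : Fin 3 → α) : (Fin.cons x f : Fin 4 → α) 1 = f 0 := rfl
@[simp] lemma fc4_2 {α : Sort*} (x : α) (f : Fin 3 → α) : (Fin.cons x f : Fin 4 → α) 2 = f 1 := rfl
@[simp] lemma fc4_3 {α : Sort*} (x : α) (f : Fin 3 → α) : (Fin.cons x f : Fin 4 → α) 3 = f 2 := rfl
@[simp] lemma fc3_1 {α : Sort*} (x : α) (f : Fin 2 → α) : (Fin.cons x f : Fin 3 → α) 1 = f 0 := rfl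
@[simp] lemma fc3_2 {α : Sort*} (x : α) (f : Fin 2 → α) : (Fin.cons x f : Fin 3 → α) 2 = f 1 := rfl

lemma br_solv (a b : ℝ) (x y : Fin 4 → ℝ) :
    br (solvSC (Matrix.diagonal ![a, b, a + b]) heis3) x y =
      ![0, a * (x 0 * y 1 - x 1 * y 0), b * (x 0 * y 2 - x 2 * y 0),
        (a + b) * (x 0 * y 3 - x 3 * y 0) + (x 1 * y 2 - x 2 * y 1)] := by
  funext k
  fin_cases k <;>
    simp [br, solvSC, Dext, cext, heis3, brk, Matrix.diagonal_apply,
      Fin.sum_univ_four] <;> ring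

lemma trace_ad (a b : ℝ) (X : Fin 4 → ℝ) :
    Matrix.trace (adM (solvSC (Matrix.diagonal ![a, b, a + b]) heis3) X
      * adM (solvSC (Matrix.diagonal ![a, b, a + b]) heis3) X)
      = (a ^ 2 + b ^ 2 + (a + b) ^ 2) * X 0 ^ 2 := by
  simp [Matrix.trace, Matrix.mul_apply, adM, solvSC, Dext, cext, heis3, brk,
    Matrix.diagonal_apply, Fin.sum_univ_four, Matrix.diag]
  ring
lemma bip_diag (q : ℝ) (x y : Fin 4 → ℝ) :
    bip (Matrix.diagonal ![1, 1, 1, q]) x y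
      = x 0 * y 0 + x 1 * y 1 + x 2 * y 2 + q * (x 3 * y 3) := by
  simp only [bip, dotProduct, Matrix.mulVec, Matrix.diagonal_apply, Fin.sum_univ_four]
  simp
  try ring

lemma bip_br (a b q : ℝ) (x y z : Fin 4 → ℝ) :
    bip (Matrix.diagonal ![1, 1, 1, q]) (br (solvSC (Matrix.diagonal ![a, b, a + b]) heis3) x y) z
      = a * (x 0 * y 1 - x 1 * y 0) * z 1 + b * (x 0 * y 2 - x 2 * y 0) * z 2
        + q * (((a + b) * (x 0 * y 3 - x 3 * y 0) + (x 1 * y 2 - x 2 * y 1)) * z 3) := by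
  rw [br_solv, bip_diag]
  simp
  try ring

set_option maxHeartbeats 1000000 in
lemma ric_eval (a b r : ℝ) (hr : r ≠ 0) (X : Fin 4 → ℝ) :
    ricForm (solvSC (Matrix.diagonal ![a, b, a + b]) heis3)
      (Matrix.diagonal ![1, 1, 1, r * r])
      ![![1,0,0,0], ![0,1,0,0], ![0,0,1,0], ![0,0,0,r⁻¹]]
      ![2 * (a + b), 0, 0, 0] X X
    = -(a ^ 2 + b ^ 2 + (a + b) ^ 2) * X 0 ^ 2
      + (-(r * r / 2) - 2 * (a + b) * a) * X 1 ^ 2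
      + (-(r * r / 2) - 2 * (a + b) * b) * X 2 ^ 2
      + ((r * r) * (r * r) / 2 - 2 * (a + b) * (a + b) * (r * r)) * X 3 ^ 2 := by
  unfold ricForm
  rw [trace_ad]
  simp only [Fin.sum_univ_succ, Finset.sum_const, Finset.card_univ, Fintype.card_fin,
    Finset.sum_empty]
  simp
  simp only [bip_br, bip_diag, br_solv]
  simp
  field_simp
  ring
lemma Dext_diag (x y z : ℝ) :
    Dext (Matrix.diagonal ![x, y, z]) = Matrix.diagonal ![0, x, y, z] := by
  funext i j
  fin_cases i <;> fin_cases j <;>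
    simp [Dext, Matrix.diagonal_apply]

lemma trace_adM (a b : ℝ) (X : Fin 4 → ℝ) :
    Matrix.trace (adM (solvSC (Matrix.diagonal ![a, b, a + b]) heis3) X)
      = 2 * (a + b) * X 0 := by
  simp [Matrix.trace, adM, solvSC, Dext, cext, heis3, brk, Matrix.diagonal_apply,
    Fin.sum_univ_four, Fin.sum_univ_succ, Matrix.diag, Fin.succ_ne_zero]
  ring

set_option maxHeartbeats 2000000 in
lemma backward (d1 d2 : ℝ) (h1 : 0 < 2 * d1 + d2) (h2 : 0 < d1 + 2 * d2) :
    IsRicciNegative heis3 (Matrix.diagonal ![d1, d2, d1 + d2]) := by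
  have hc : 0 < d1 + d2 := by linarith
  obtain ⟨s, hs0, hsa, hsb, hsc⟩ :
      ∃ s : ℝ, 0 < s ∧ -(4 * (d1 + d2) * d1) < s ∧ -(4 * (d1 + d2) * d2) < s ∧
        s < 4 * (d1 + d2) ^ 2 := by
    refine ⟨(4 * (d1 + d2) ^ 2 + max 0 (max (-(4 * (d1 + d2) * d1)) (-(4 * (d1 + d2) * d2)))) / 2,
      ?_, ?_, ?_, ?_⟩
    · have := le_max_left (0:ℝ) (max (-(4 * (d1 + d2) * d1)) (-(4 * (d1 + d2) * d2)))
      nlinarith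
    · have := le_trans (le_max_left (-(4 * (d1 + d2) * d1)) (-(4 * (d1 + d2) * d2)))
        (le_max_right (0:ℝ) _)
      nlinarith
    · have := le_trans (le_max_right (-(4 * (d1 + d2) * d1)) (-(4 * (d1 + d2) * d2)))
        (le_max_right (0:ℝ) _)
      nlinarith
    · have hm : max 0 (max (-(4 * (d1 + d2) * d1)) (-(4 * (d1 + d2) * d2)))
          < 4 * (d1 + d2) ^ 2 := by
        apply max_lt (by nlinarith)
        apply max_lt <;> nlinarith
      nlinarith
  have hrne : Real.sqrt s ≠ 0 := ne_of_gt (Real.sqrt_pos.mpr hs0)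
  have hrr : Real.sqrt s * Real.sqrt s = s := Real.mul_self_sqrt hs0.le
  set r : ℝ := Real.sqrt s with hrdef
  refine ⟨Matrix.diagonal ![1, 1, 1, r * r], ?_, ?_, ?_, ?_⟩
  · refine Matrix.posDef_diagonal_iff.mpr ?_
    intro i
    fin_cases i <;> simp <;> nlinarith [hrr, hs0]
  · intro j
    refine Matrix.diagonal_apply_ne _ ?_
    exact (Fin.succ_ne_zero j).symm
  · rw [Dext_diag, Matrix.diagonal_transpose, Matrix.diagonal_mul_diagonal,
      Matrix.diagonal_mul_diagonal]
    exact congrArg Matrix.diagonal (funext fun i => mul_comm _ _)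
  · refine ⟨![![1,0,0,0], ![0,1,0,0], ![0,0,1,0], ![0,0,0,r⁻¹]], ?_, ?_⟩
    · intro a' b'
      fin_cases a' <;> fin_cases b' <;>
        simp [bip_diag] <;> field_simp
    · refine ⟨![2 * (d1 + d2), 0, 0, 0], ?_, ?_⟩
      · intro X
        rw [trace_adM, bip_diag]
        simp
        try ring
      · intro X hX
        rw [ric_eval d1 d2 r hrne X]
        obtain ⟨i, hi0⟩ := Function.ne_iff.mp hX
        have hi : X i ≠ 0 := by simpa using hi0
        have hc0 : -(d1 ^ 2 + d2 ^ 2 + (d1 + d2) ^ 2) < 0 := by nlinarith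
        have hc1 : -(r * r / 2) - 2 * (d1 + d2) * d1 < 0 := by rw [hrr]; nlinarith
        have hc2 : -(r * r / 2) - 2 * (d1 + d2) * d2 < 0 := by rw [hrr]; nlinarith
        have hc3 : (r * r) * (r * r) / 2 - 2 * (d1 + d2) * (d1 + d2) * (r * r) < 0 := by
          rw [hrr]; nlinarith [mul_lt_mul_of_pos_left hsc hs0]
        have hp : ∀ k : Fin 4, X k ≠ 0 → 0 < X k ^ 2 := fun k hk =>
          lt_of_le_of_ne (sq_nonneg _) (Ne.symm (pow_ne_zero 2 hk))
        have hor : 0 < X 0 ^ 2 ∨ 0 < X 1 ^ 2 ∨ 0 < X 2 ^ 2 ∨ 0 < X 3 ^ 2 := by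
          fin_cases i
          · exact Or.inl (hp _ hi)
          · exact Or.inr (Or.inl (hp _ hi))
          · exact Or.inr (Or.inr (Or.inl (hp _ hi)))
          · exact Or.inr (Or.inr (Or.inr (hp _ hi)))
        rcases hor with h | h | h | h <;>
          nlinarith [mul_nonneg (neg_nonneg.mpr hc0.le) (sq_nonneg (X 0)),
            mul_nonneg (neg_nonneg.mpr hc1.le) (sq_nonneg (X 1)),
            mul_nonneg (neg_nonneg.mpr hc2.le) (sq_nonneg (X 2)),
            mul_nonneg (neg_nonneg.mpr hc3.le) (sq_nonneg (X 3)),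
            mul_pos (neg_pos.mpr hc0) h, mul_pos (neg_pos.mpr hc1) h,
            mul_pos (neg_pos.mpr hc2) h, mul_pos (neg_pos.mpr hc3) h]
lemma bip_diag4 (p q1 q2 q3 : ℝ) (x y : Fin 4 → ℝ) :
    bip (Matrix.diagonal ![p, q1, q2, q3]) x y
      = p * (x 0 * y 0) + q1 * (x 1 * y 1) + q2 * (x 2 * y 2) + q3 * (x 3 * y 3) := by
  simp only [bip, dotProduct, Matrix.mulVec, Matrix.diagonal_apply, Fin.sum_univ_four]
  simp
  ring

lemma sumS (p q1 q2 q3 : ℝ) (u : Fin 4 → Fin 4 → ℝ)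
    (huon : ∀ a' b', bip (Matrix.diagonal ![p, q1, q2, q3]) (u a') (u b')
      = if a' = b' then (1:ℝ) else 0) :
    ∀ i j : Fin 4, (![p, q1, q2, q3] i) * (∑ x : Fin 4, u x i * u x j)
      = if i = j then (1:ℝ) else 0 := by
  set Pd : Matrix (Fin 4) (Fin 4) ℝ := Matrix.diagonal ![p, q1, q2, q3] with hPd
  have hU : (Matrix.of u) * (Pd * (Matrix.of u).transpose) = 1 := by
    ext a' b'
    have h := huon a' b'
    simp only [bip, dotProduct, Matrix.mulVec] at h
    simp only [Matrix.mul_apply, Matrix.transpose_apply, Matrix.of_apply, Matrix.one_apply]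
    rw [← h]
  have hcomm : (Pd * (Matrix.of u).transpose) * (Matrix.of u) = 1 := mul_eq_one_comm.mp hU
  intro i j
  have h : ((Pd * (Matrix.of u).transpose) * (Matrix.of u)) i j = (1 : Matrix (Fin 4) (Fin 4) ℝ) i j := by
    rw [hcomm]
  rw [Matrix.mul_apply] at h
  simp only [Matrix.mul_apply, Matrix.transpose_apply, Matrix.of_apply, hPd,
    Matrix.diagonal_apply, ite_mul, zero_mul, Finset.sum_ite_eq, Finset.mem_univ,
    if_true, Matrix.one_apply] at h
  rw [Finset.mul_sum]
  rw [← h]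
  apply Finset.sum_congr rfl
  intro x _
  ring
lemma bip_br4 (a b p q1 q2 q3 : ℝ) (x y z : Fin 4 → ℝ) :
    bip (Matrix.diagonal ![p, q1, q2, q3])
        (br (solvSC (Matrix.diagonal ![a, b, a + b]) heis3) x y) z
      = q1 * (a * (x 0 * y 1 - x 1 * y 0) * z 1) + q2 * (b * (x 0 * y 2 - x 2 * y 0) * z 2)
        + q3 * (((a + b) * (x 0 * y 3 - x 3 * y 0) + (x 1 * y 2 - x 2 * y 1)) * z 3) := by
  rw [br_solv, bip_diag4]
  simp
  try ring

set_option maxHeartbeats 1600000 in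
lemma forward_core (a b p q1 q2 q3 : ℝ) (hab : 0 < a + b)
    (hp : 0 < p) (hq1 : 0 < q1) (hq2 : 0 < q2) (hq3 : 0 < q3)
    (u : Fin 4 → Fin 4 → ℝ)
    (huon : ∀ a' b', bip (Matrix.diagonal ![p, q1, q2, q3]) (u a') (u b')
      = if a' = b' then (1:ℝ) else 0)
    (H : Fin 4 → ℝ)
    (hH : ∀ X : Fin 4 → ℝ, bip (Matrix.diagonal ![p, q1, q2, q3]) H X
      = Matrix.trace (adM (solvSC (Matrix.diagonal ![a, b, a + b]) heis3) X))
    (hneg : ∀ X : Fin 4 → ℝ, X ≠ 0 →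
      ricForm (solvSC (Matrix.diagonal ![a, b, a + b]) heis3)
        (Matrix.diagonal ![p, q1, q2, q3]) u H X X < 0) :
    0 < 2 * a + b ∧ 0 < a + 2 * b := by
  have hT := sumS p q1 q2 q3 u huon
  -- diagonal sums
  have hv0 : (∑ x : Fin 4, u x 0 * u x 0) = p⁻¹ := by
    have h := hT 0 0; rw [if_pos rfl] at h
    exact eq_inv_of_mul_eq_one_right h
  have hv1 : (∑ x : Fin 4, u x 1 * u x 1) = q1⁻¹ := by
    have h := hT 1 1; rw [if_pos rfl] at h
    exact eq_inv_of_mul_eq_one_right h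
  have hv2 : (∑ x : Fin 4, u x 2 * u x 2) = q2⁻¹ := by
    have h := hT 2 2; rw [if_pos rfl] at h
    exact eq_inv_of_mul_eq_one_right h
  have hv3 : (∑ x : Fin 4, u x 3 * u x 3) = q3⁻¹ := by
    have h := hT 3 3; rw [if_pos rfl] at h
    exact eq_inv_of_mul_eq_one_right h
  -- off-diagonal sums vanish
  have hz : ∀ i j : Fin 4, i ≠ j → (∑ x : Fin 4, u x i * u x j) = 0 := by
    intro i j hij
    have h := hT i j
    rw [if_neg hij] at h
    have hv : ![p, q1, q2, q3] i ≠ 0 := by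
      fin_cases i <;> simp <;> positivity
    exact (mul_eq_zero.mp h).resolve_left hv
  -- H components
  have hH0 : H 0 = p⁻¹ * (2 * (a + b)) := by
    have h := hH ![1, 0, 0, 0]
    rw [bip_diag4, trace_adM] at h
    simp at h
    field_simp at h ⊢
    linarith
  have hH2 : H 2 = 0 := by
    have h := hH ![0, 0, 1, 0]
    rw [bip_diag4, trace_adM] at h
    simp at h
    rcases h with h | h
    · exact absurd h hq2.ne'
    · exact h
  -- the bracket
  have hne1 : (![0, 1, 0, 0] : Fin 4 → ℝ) ≠ 0 := by
    intro h; exact one_ne_zero (congrFun h 1)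
  have hne2 : (![0, 0, 1, 0] : Fin 4 → ℝ) ≠ 0 := by
    intro h; exact one_ne_zero (congrFun h 2)
  have hne3 : (![0, 0, 0, 1] : Fin 4 → ℝ) ≠ 0 := by
    intro h; exact one_ne_zero (congrFun h 3)
  -- value of ricForm at e1
  have t1 : ∀ w : Fin 4 → ℝ,
      bip (Matrix.diagonal ![p, q1, q2, q3])
        (br (solvSC (Matrix.diagonal ![a, b, a + b]) heis3) ![0, 1, 0, 0] w)
        (br (solvSC (Matrix.diagonal ![a, b, a + b]) heis3) ![0, 1, 0, 0] w)
      = q1 * (a * a) * (w 0 * w 0) + q3 * (w 2 * w 2) := by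
    intro w
    rw [br_solv, bip_diag4]
    simp
    try ring
  have hsum1 : (∑ x : Fin 4,
      bip (Matrix.diagonal ![p, q1, q2, q3])
        (br (solvSC (Matrix.diagonal ![a, b, a + b]) heis3) ![0, 1, 0, 0] (u x))
        (br (solvSC (Matrix.diagonal ![a, b, a + b]) heis3) ![0, 1, 0, 0] (u x)))
      = q1 * (a * a) * p⁻¹ + q3 * q2⁻¹ := by
    rw [Finset.sum_congr rfl (fun x _ => t1 (u x))]
    simp only [Finset.sum_add_distrib, ← Finset.mul_sum]
    rw [hv0, hv2]
  have hds1 : (∑ x : Fin 4, ∑ y : Fin 4,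
      bip (Matrix.diagonal ![p, q1, q2, q3])
        (br (solvSC (Matrix.diagonal ![a, b, a + b]) heis3) (u x) (u y)) ![0, 1, 0, 0]
      * bip (Matrix.diagonal ![p, q1, q2, q3])
        (br (solvSC (Matrix.diagonal ![a, b, a + b]) heis3) (u x) (u y)) ![0, 1, 0, 0])
      = 2 * (q1 * a) ^ 2 * (p⁻¹ * q1⁻¹) := by
    have hstep : (∑ x : Fin 4, ∑ y : Fin 4,
        bip (Matrix.diagonal ![p, q1, q2, q3])
          (br (solvSC (Matrix.diagonal ![a, b, a + b]) heis3) (u x) (u y)) ![0, 1, 0, 0]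
        * bip (Matrix.diagonal ![p, q1, q2, q3])
          (br (solvSC (Matrix.diagonal ![a, b, a + b]) heis3) (u x) (u y)) ![0, 1, 0, 0])
        = (∑ x : Fin 4, ∑ y : Fin 4,
            (((q1 * a) ^ 2) * ((u x 0 * u x 0) * (u y 1 * u y 1))
            + ((q1 * a) ^ 2) * ((u x 1 * u x 1) * (u y 0 * u y 0))
            + (-2 * (q1 * a) ^ 2) * ((u x 0 * u x 1) * (u y 1 * u y 0)))) := by
      refine Finset.sum_congr rfl fun x _ => Finset.sum_congr rfl fun y _ => ?_
      rw [bip_br4]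
      simp
      try ring
    rw [hstep]
    simp only [Finset.sum_add_distrib, ← Finset.mul_sum, ← Finset.sum_mul]
    rw [hv0, hv1, hz 0 1 (by decide), hz 1 0 (by decide)]
    ring
  have t4 : bip (Matrix.diagonal ![p, q1, q2, q3])
      (br (solvSC (Matrix.diagonal ![a, b, a + b]) heis3) H ![0, 1, 0, 0]) ![0, 1, 0, 0]
      = q1 * (a * H 0) := by
    rw [bip_br4]
    simp
    try ring
  have hE1val : ricForm (solvSC (Matrix.diagonal ![a, b, a + b]) heis3)
      (Matrix.diagonal ![p, q1, q2, q3]) u H ![0, 1, 0, 0] ![0, 1, 0, 0]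
      = -(1/2) * (q3 * q2⁻¹) - 2 * (a + b) * a * q1 * p⁻¹ := by
    unfold ricForm
    rw [hsum1, hds1, trace_ad, t4, hH0]
    simp only [Matrix.cons_val_zero]
    field_simp
    ring
  have hA1 : -(1/2) * (p * q3) - 2 * (a + b) * a * q1 * q2 < 0 := by
    have h := hneg ![0, 1, 0, 0] hne1
    rw [hE1val] at h
    have h2 := mul_neg_of_pos_of_neg (mul_pos hp hq2) h
    have hiden : (p * q2) * (-(1/2) * (q3 * q2⁻¹) - 2 * (a + b) * a * q1 * p⁻¹)
        = -(1/2) * (p * q3) - 2 * (a + b) * a * q1 * q2 := by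
      field_simp
    rwa [hiden] at h2
  -- value of ricForm at e2
  have t1' : ∀ w : Fin 4 → ℝ,
      bip (Matrix.diagonal ![p, q1, q2, q3])
        (br (solvSC (Matrix.diagonal ![a, b, a + b]) heis3) ![0, 0, 1, 0] w)
        (br (solvSC (Matrix.diagonal ![a, b, a + b]) heis3) ![0, 0, 1, 0] w)
      = q2 * (b * b) * (w 0 * w 0) + q3 * (w 1 * w 1) := by
    intro w
    rw [br_solv, bip_diag4]
    simp
    try ring
  have hsum1' : (∑ x : Fin 4,
      bip (Matrix.diagonal ![p, q1, q2, q3])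
        (br (solvSC (Matrix.diagonal ![a, b, a + b]) heis3) ![0, 0, 1, 0] (u x))
        (br (solvSC (Matrix.diagonal ![a, b, a + b]) heis3) ![0, 0, 1, 0] (u x)))
      = q2 * (b * b) * p⁻¹ + q3 * q1⁻¹ := by
    rw [Finset.sum_congr rfl (fun x _ => t1' (u x))]
    simp only [Finset.sum_add_distrib, ← Finset.mul_sum]
    rw [hv0, hv1]
  have hds1' : (∑ x : Fin 4, ∑ y : Fin 4,
      bip (Matrix.diagonal ![p, q1, q2, q3])
        (br (solvSC (Matrix.diagonal ![a, b, a + b]) heis3) (u x) (u y)) ![0, 0, 1, 0]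
      * bip (Matrix.diagonal ![p, q1, q2, q3])
        (br (solvSC (Matrix.diagonal ![a, b, a + b]) heis3) (u x) (u y)) ![0, 0, 1, 0])
      = 2 * (q2 * b) ^ 2 * (p⁻¹ * q2⁻¹) := by
    have hstep : (∑ x : Fin 4, ∑ y : Fin 4,
        bip (Matrix.diagonal ![p, q1, q2, q3])
          (br (solvSC (Matrix.diagonal ![a, b, a + b]) heis3) (u x) (u y)) ![0, 0, 1, 0]
        * bip (Matrix.diagonal ![p, q1, q2, q3])
          (br (solvSC (Matrix.diagonal ![a, b, a + b]) heis3) (u x) (u y)) ![0, 0, 1, 0])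
        = (∑ x : Fin 4, ∑ y : Fin 4,
            (((q2 * b) ^ 2) * ((u x 0 * u x 0) * (u y 2 * u y 2))
            + ((q2 * b) ^ 2) * ((u x 2 * u x 2) * (u y 0 * u y 0))
            + (-2 * (q2 * b) ^ 2) * ((u x 0 * u x 2) * (u y 2 * u y 0)))) := by
      refine Finset.sum_congr rfl fun x _ => Finset.sum_congr rfl fun y _ => ?_
      rw [bip_br4]
      simp
      try ring
    rw [hstep]
    simp only [Finset.sum_add_distrib, ← Finset.mul_sum, ← Finset.sum_mul]
    rw [hv0, hv2, hz 0 2 (by decide), hz 2 0 (by decide)]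
    ring
  have t4' : bip (Matrix.diagonal ![p, q1, q2, q3])
      (br (solvSC (Matrix.diagonal ![a, b, a + b]) heis3) H ![0, 0, 1, 0]) ![0, 0, 1, 0]
      = q2 * (b * H 0) := by
    rw [bip_br4]
    simp
    try ring
  have hE2val : ricForm (solvSC (Matrix.diagonal ![a, b, a + b]) heis3)
      (Matrix.diagonal ![p, q1, q2, q3]) u H ![0, 0, 1, 0] ![0, 0, 1, 0]
      = -(1/2) * (q3 * q1⁻¹) - 2 * (a + b) * b * q2 * p⁻¹ := by
    unfold ricForm
    rw [hsum1', hds1', trace_ad, t4', hH0]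
    simp only [Matrix.cons_val_zero]
    field_simp
    ring
  have hA2 : -(1/2) * (p * q3) - 2 * (a + b) * b * q2 * q1 < 0 := by
    have h := hneg ![0, 0, 1, 0] hne2
    rw [hE2val] at h
    have h2 := mul_neg_of_pos_of_neg (mul_pos hp hq1) h
    have hiden : (p * q1) * (-(1/2) * (q3 * q1⁻¹) - 2 * (a + b) * b * q2 * p⁻¹)
        = -(1/2) * (p * q3) - 2 * (a + b) * b * q2 * q1 := by
      field_simp
    rwa [hiden] at h2
  -- value of ricForm at e3
  have t1'' : ∀ w : Fin 4 → ℝ,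
      bip (Matrix.diagonal ![p, q1, q2, q3])
        (br (solvSC (Matrix.diagonal ![a, b, a + b]) heis3) ![0, 0, 0, 1] w)
        (br (solvSC (Matrix.diagonal ![a, b, a + b]) heis3) ![0, 0, 0, 1] w)
      = q3 * ((a + b) * (a + b)) * (w 0 * w 0) := by
    intro w
    rw [br_solv, bip_diag4]
    simp
    try ring
  have hsum1'' : (∑ x : Fin 4,
      bip (Matrix.diagonal ![p, q1, q2, q3])
        (br (solvSC (Matrix.diagonal ![a, b, a + b]) heis3) ![0, 0, 0, 1] (u x))
        (br (solvSC (Matrix.diagonal ![a, b, a + b]) heis3) ![0, 0, 0, 1] (u x)))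
      = q3 * ((a + b) * (a + b)) * p⁻¹ := by
    rw [Finset.sum_congr rfl (fun x _ => t1'' (u x))]
    simp only [← Finset.mul_sum]
    rw [hv0]
  have hds1'' : (∑ x : Fin 4, ∑ y : Fin 4,
      bip (Matrix.diagonal ![p, q1, q2, q3])
        (br (solvSC (Matrix.diagonal ![a, b, a + b]) heis3) (u x) (u y)) ![0, 0, 0, 1]
      * bip (Matrix.diagonal ![p, q1, q2, q3])
        (br (solvSC (Matrix.diagonal ![a, b, a + b]) heis3) (u x) (u y)) ![0, 0, 0, 1])
      = 2 * (q3 * (a + b)) ^ 2 * (p⁻¹ * q3⁻¹) + 2 * q3 ^ 2 * (q1⁻¹ * q2⁻¹) := by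
    have hstep : (∑ x : Fin 4, ∑ y : Fin 4,
        bip (Matrix.diagonal ![p, q1, q2, q3])
          (br (solvSC (Matrix.diagonal ![a, b, a + b]) heis3) (u x) (u y)) ![0, 0, 0, 1]
        * bip (Matrix.diagonal ![p, q1, q2, q3])
          (br (solvSC (Matrix.diagonal ![a, b, a + b]) heis3) (u x) (u y)) ![0, 0, 0, 1])
        = (∑ x : Fin 4, ∑ y : Fin 4,
            (((q3 * (a + b)) ^ 2) * ((u x 0 * u x 0) * (u y 3 * u y 3))
            + ((q3 * (a + b)) ^ 2) * ((u x 3 * u x 3) * (u y 0 * u y 0))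
            + (-2 * (q3 * (a + b)) ^ 2) * ((u x 0 * u x 3) * (u y 3 * u y 0))
            + (q3 ^ 2) * ((u x 1 * u x 1) * (u y 2 * u y 2))
            + (q3 ^ 2) * ((u x 2 * u x 2) * (u y 1 * u y 1))
            + (-2 * q3 ^ 2) * ((u x 1 * u x 2) * (u y 2 * u y 1))
            + (2 * q3 ^ 2 * (a + b)) * ((u x 0 * u x 1) * (u y 3 * u y 2))
            + (-2 * q3 ^ 2 * (a + b)) * ((u x 0 * u x 2) * (u y 3 * u y 1))
            + (-2 * q3 ^ 2 * (a + b)) * ((u x 3 * u x 1) * (u y 0 * u y 2))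
            + (2 * q3 ^ 2 * (a + b)) * ((u x 3 * u x 2) * (u y 0 * u y 1)))) := by
      refine Finset.sum_congr rfl fun x _ => Finset.sum_congr rfl fun y _ => ?_
      rw [bip_br4]
      simp
      try ring
    rw [hstep]
    simp only [Finset.sum_add_distrib, ← Finset.mul_sum, ← Finset.sum_mul]
    rw [hv0, hv1, hv2, hv3, hz 0 1 (by decide), hz 0 2 (by decide), hz 0 3 (by decide),
      hz 3 0 (by decide), hz 1 2 (by decide), hz 2 1 (by decide), hz 3 1 (by decide),
      hz 3 2 (by decide)]
    ring
  have t4'' : bip (Matrix.diagonal ![p, q1, q2, q3])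
      (br (solvSC (Matrix.diagonal ![a, b, a + b]) heis3) H ![0, 0, 0, 1]) ![0, 0, 0, 1]
      = q3 * ((a + b) * H 0 + (H 1 * 0 - H 2 * 0)) := by
    rw [bip_br4]
    simp
    try ring
  have hE3val : ricForm (solvSC (Matrix.diagonal ![a, b, a + b]) heis3)
      (Matrix.diagonal ![p, q1, q2, q3]) u H ![0, 0, 0, 1] ![0, 0, 0, 1]
      = (1/2) * (q3 * q3 * (q1⁻¹ * q2⁻¹)) - 2 * (a + b) * (a + b) * q3 * p⁻¹ := by
    unfold ricForm
    rw [hsum1'', hds1'', trace_ad, t4'', hH0]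
    simp only [Matrix.cons_val_zero]
    field_simp
    ring
  have hA3 : (1/2) * (p * q3 * q3) - 2 * (a + b) * (a + b) * q3 * q1 * q2 < 0 := by
    have h := hneg ![0, 0, 0, 1] hne3
    rw [hE3val] at h
    have h2 := mul_neg_of_pos_of_neg (mul_pos hp (mul_pos hq1 hq2)) h
    have hiden : (p * (q1 * q2)) * ((1/2) * (q3 * q3 * (q1⁻¹ * q2⁻¹)) - 2 * (a + b) * (a + b) * q3 * p⁻¹)
        = (1/2) * (p * q3 * q3) - 2 * (a + b) * (a + b) * q3 * q1 * q2 := by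
      field_simp
    rwa [hiden] at h2
  have hA3' : (1/2) * (p * q3) - 2 * (a + b) * (a + b) * q1 * q2 < 0 := by
    by_contra hcon
    push_neg at hcon
    nlinarith [mul_nonneg hq3.le hcon]
  constructor
  · by_contra hcon
    push_neg at hcon
    nlinarith [hA1, hA3',
      mul_nonneg hab.le (mul_nonneg (mul_nonneg hq1.le hq2.le)
        (by linarith : 0 ≤ -(a + (a + b))))]
  · by_contra hcon
    push_neg at hcon
    nlinarith [hA2, hA3',
      mul_nonneg hab.le (mul_nonneg (mul_nonneg hq1.le hq2.le)
        (by linarith : 0 ≤ -(b + (a + b))))]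
/-- Example 3.4 (heis3): diagonal derivations of the Heisenberg Lie algebra and the
Ricci negative ones among them. -/
theorem statement10 :
    (∀ D : Matrix (Fin 3) (Fin 3) ℝ, D.IsDiag →
      (IsDeriv heis3 D ↔ ∃ d1 d2 : ℝ, D = Matrix.diagonal ![d1, d2, d1 + d2])) ∧
    (∀ d1 d2 : ℝ,
      0 < (Matrix.diagonal ![d1, d2, d1 + d2] : Matrix (Fin 3) (Fin 3) ℝ).trace →
      (IsRicciNegative heis3 (Matrix.diagonal ![d1, d2, d1 + d2]) ↔
        0 < 2 * d1 + d2 ∧ 0 < d1 + 2 * d2)) := by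
  constructor
  · exact partA
  · intro d1 d2 htr
    have hc : 0 < d1 + d2 := by
      have h : (Matrix.diagonal ![d1, d2, d1 + d2] : Matrix (Fin 3) (Fin 3) ℝ).trace
          = d1 + d2 + (d1 + d2) := by
        simp [Matrix.trace_diagonal, Fin.sum_univ_three]
      rw [h] at htr
      linarith
    constructor
    · intro hRic
      by_cases h1 : d1 = 0
      · exact ⟨by linarith, by linarith⟩
      by_cases h2 : d2 = 0
      · exact ⟨by linarith, by linarith⟩
      by_cases h12 : d1 = d2
      · exact ⟨by linarith, by linarith⟩
      obtain ⟨P, hPpos, hP0, hPcomm, u, huon, H, hH, hneg⟩ := hRic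
      have hsym : ∀ i j, P j i = P i j := by
        intro i j
        have h := congrFun (congrFun hPpos.1 i) j
        simpa [Matrix.conjTranspose_apply] using h
      have e01 : P 0 1 = 0 := hP0 0
      have e02 : P 0 2 = 0 := hP0 1
      have e03 : P 0 3 = 0 := hP0 2
      rw [Dext_diag] at hPcomm
      have hent : ∀ i j : Fin 4, ![0, d1, d2, d1 + d2] i * P i j
          = P i j * ![0, d1, d2, d1 + d2] j := by
        intro i j
        have h := congrFun (congrFun hPcomm i) j
        simpa [Matrix.diagonal_transpose, Matrix.diagonal_mul, Matrix.mul_diagonal] using h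
      have e12 : P 1 2 = 0 := by
        have h := hent 1 2
        simp at h
        have h' : (d1 - d2) * P 1 2 = 0 := by linear_combination h
        rcases mul_eq_zero.mp h' with h'' | h''
        · exact absurd (by linarith : d1 = d2) h12
        · exact h''
      have e13 : P 1 3 = 0 := by
        have h := hent 1 3
        simp at h
        have h' : d2 * P 1 3 = 0 := by linear_combination -h
        exact (mul_eq_zero.mp h').resolve_left h2
      have e23 : P 2 3 = 0 := by
        have h := hent 2 3
        simp at h
        have h' : d1 * P 2 3 = 0 := by linear_combination -h
        exact (mul_eq_zero.mp h').resolve_left h1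
      have e10 : P 1 0 = 0 := (hsym 0 1).trans e01
      have e20 : P 2 0 = 0 := (hsym 0 2).trans e02
      have e30 : P 3 0 = 0 := (hsym 0 3).trans e03
      have e21 : P 2 1 = 0 := (hsym 1 2).trans e12
      have e31 : P 3 1 = 0 := (hsym 1 3).trans e13
      have e32 : P 3 2 = 0 := (hsym 2 3).trans e23
      have hp00 : 0 < P 0 0 := by
        have h := hPpos.dotProduct_mulVec_pos (x := ![1, 0, 0, 0]) (by intro hh; exact one_ne_zero (congrFun hh 0))
        simpa [dotProduct, Matrix.mulVec, Fin.sum_univ_four, Fin.sum_univ_succ]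
          using h
      have hp11 : 0 < P 1 1 := by
        have h := hPpos.dotProduct_mulVec_pos (x := ![0, 1, 0, 0]) (by intro hh; exact one_ne_zero (congrFun hh 1))
        simpa [dotProduct, Matrix.mulVec, Fin.sum_univ_four, Fin.sum_univ_succ]
          using h
      have hp22 : 0 < P 2 2 := by
        have h := hPpos.dotProduct_mulVec_pos (x := ![0, 0, 1, 0]) (by intro hh; exact one_ne_zero (congrFun hh 2))
        simpa [dotProduct, Matrix.mulVec, Fin.sum_univ_four, Fin.sum_univ_succ]
          using h
      have hp33 : 0 < P 3 3 := by
        have h := hPpos.dotProduct_mulVec_pos (x := ![0, 0, 0, 1]) (by intro hh; exact one_ne_zero (congrFun hh 3))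
        simpa [dotProduct, Matrix.mulVec, Fin.sum_univ_four, Fin.sum_univ_succ]
          using h
      have hPdiag : P = Matrix.diagonal ![P 0 0, P 1 1, P 2 2, P 3 3] := by
        funext i j
        fin_cases i <;> fin_cases j <;>
          simp [Matrix.diagonal_apply, e01, e02, e03, e12, e13, e23, e10, e20, e30,
            e21, e31, e32]
      rw [hPdiag] at huon hH hneg
      exact forward_core d1 d2 (P 0 0) (P 1 1) (P 2 2) (P 3 3) hc hp00 hp11 hp22 hp33
        u huon H hH hneg
    · rintro ⟨g1, g2⟩
      exact backward d1 d2 g1 g2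
end RNPaper
end

section
/- Let 𝔫 be the 11-dimensional nilpotent Lie algebra with basis X₁,…,X₅, Y₁,…,Y₅, Z and nonzero basis brackets (up to antisymmetry) [X₁,X₂]=X₃, [X₁,X₃]=X₄, [X₁,X₄]=X₅, [X₂,X₃]=X₅, [Y₁,Y₂]=Y₃, [Y₁,Y₃]=Y₄, [Y₁,Y₄]=Y₅, [Y₂,Y₃]=Y₅, [X₁,Y₁]=Z, [X₂,Y₂]=Z. Then: (a) the diagonal map D with D(Xᵢ) = i Xᵢ, D(Yⱼ) = −j Yⱼ (1 ≤ i,j ≤ 5) and D(Z) = 0 is a nonzero derivation of 𝔫 diagonalizable over ℝ; (b) every derivation of 𝔫 has trace 0; moreover (c) every derivation of 𝔫 which is diagonalizable over ℝ and commutes with D is a real scalar multiple of D. -/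
open scoped BigOperators

namespace RNPaper

variable {n : ℕ}

/-- Example 4.2 (ex3): basis `X₁,…,X₅ = e₀,…,e₄`, `Y₁,…,Y₅ = e₅,…,e₉`, `Z = e₁₀`. -/
def c14 : SC 11 :=
  brk 0 1 2 1 + brk 0 2 3 1 + brk 0 3 4 1 + brk 1 2 4 1 +
    brk 5 6 7 1 + brk 5 7 8 1 + brk 5 8 9 1 + brk 6 7 9 1 +
    brk 0 5 10 1 + brk 1 6 10 1

/-- `D(Xᵢ) = i Xᵢ`, `D(Yⱼ) = −j Yⱼ`, `D(Z) = 0`. -/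
noncomputable def D14 : Matrix (Fin 11) (Fin 11) ℝ :=
  Matrix.diagonal ![1, 2, 3, 4, 5, -1, -2, -3, -4, -5, 0]


noncomputable def v14 : Fin 11 → ℝ := ![1, 2, 3, 4, 5, -1, -2, -3, -4, -5, 0]

lemma brk_wt14 {N : ℕ} {d : Fin N → ℝ} {i0 j0 k0 : Fin N} (v : ℝ)
    (hw : d k0 = d i0 + d j0) (i j k : Fin N) :
    d k * brk i0 j0 k0 v i j k = (d i + d j) * brk i0 j0 k0 v i j k := by
  unfold brk
  split_ifs with h1 h2
  · obtain ⟨rfl, rfl, rfl⟩ := h1; rw [hw]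
  · obtain ⟨rfl, rfl, rfl⟩ := h2; rw [hw]; ring
  · ring

lemma key14 (i j k : Fin 11) : v14 k * c14 i j k = (v14 i + v14 j) * c14 i j k := by
  simp only [c14, Pi.add_apply, mul_add]
  rw [brk_wt14 1 (show v14 2 = v14 0 + v14 1 by rw [show v14 2 = (3 : ℝ) from rfl, show v14 0 = (1 : ℝ) from rfl, show v14 1 = (2 : ℝ) from rfl]; norm_num) i j k,
      brk_wt14 1 (show v14 3 = v14 0 + v14 2 by rw [show v14 3 = (4 : ℝ) from rfl, show v14 0 = (1 : ℝ) from rfl, show v14 2 = (3 : ℝ) from rfl]; norm_num) i j k,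
      brk_wt14 1 (show v14 4 = v14 0 + v14 3 by rw [show v14 4 = (5 : ℝ) from rfl, show v14 0 = (1 : ℝ) from rfl, show v14 3 = (4 : ℝ) from rfl]; norm_num) i j k,
      brk_wt14 1 (show v14 4 = v14 1 + v14 2 by rw [show v14 4 = (5 : ℝ) from rfl, show v14 1 = (2 : ℝ) from rfl, show v14 2 = (3 : ℝ) from rfl]; norm_num) i j k,
      brk_wt14 1 (show v14 7 = v14 5 + v14 6 by rw [show v14 7 = (-3 : ℝ) from rfl, show v14 5 = (-1 : ℝ) from rfl, show v14 6 = (-2 : ℝ) from rfl]; norm_num) i j k,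
      brk_wt14 1 (show v14 8 = v14 5 + v14 7 by rw [show v14 8 = (-4 : ℝ) from rfl, show v14 5 = (-1 : ℝ) from rfl, show v14 7 = (-3 : ℝ) from rfl]; norm_num) i j k,
      brk_wt14 1 (show v14 9 = v14 5 + v14 8 by rw [show v14 9 = (-5 : ℝ) from rfl, show v14 5 = (-1 : ℝ) from rfl, show v14 8 = (-4 : ℝ) from rfl]; norm_num) i j k,
      brk_wt14 1 (show v14 9 = v14 6 + v14 7 by rw [show v14 9 = (-5 : ℝ) from rfl, show v14 6 = (-2 : ℝ) from rfl, show v14 7 = (-3 : ℝ) from rfl]; norm_num) i j k,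
      brk_wt14 1 (show v14 10 = v14 0 + v14 5 by rw [show v14 10 = (0 : ℝ) from rfl, show v14 0 = (1 : ℝ) from rfl, show v14 5 = (-1 : ℝ) from rfl]; norm_num) i j k,
      brk_wt14 1 (show v14 10 = v14 1 + v14 6 by rw [show v14 10 = (0 : ℝ) from rfl, show v14 1 = (2 : ℝ) from rfl, show v14 6 = (-2 : ℝ) from rfl]; norm_num) i j k]

lemma isDeriv_D14 : IsDeriv c14 D14 := by
  intro x y
  funext k
  have hD : D14 = Matrix.diagonal v14 := rfl
  simp only [hD, Pi.add_apply, br, Matrix.mulVec_diagonal]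
  rw [Finset.mul_sum, ← Finset.sum_add_distrib]
  refine Finset.sum_congr rfl fun i _ => ?_
  rw [Finset.mul_sum, ← Finset.sum_add_distrib]
  refine Finset.sum_congr rfl fun j _ => ?_
  have h := key14 i j k
  calc v14 k * (x i * y j * c14 i j k) = x i * y j * (v14 k * c14 i j k) := by ring
    _ = x i * y j * ((v14 i + v14 j) * c14 i j k) := by rw [h]
    _ = v14 i * x i * y j * c14 i j k + x i * (v14 j * y j) * c14 i j k := by ring

lemma deriv_eq14 (c : SC 11) (D : Matrix (Fin 11) (Fin 11) ℝ) (h : IsDeriv c D) (i j k : Fin 11) :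
    ∑ l, c i j l * D k l = ∑ p, c p j k * D p i + ∑ q, c i q k * D q j := by
  have := congrFun (h (Pi.single i 1) (Pi.single j 1)) k
  simpa [br, Matrix.mulVec, dotProduct, Pi.single_apply, mul_ite, ite_mul,
    Finset.sum_ite_eq, Finset.sum_ite_eq', mul_comm] using this

set_option maxHeartbeats 2000000 in
lemma diag_eqs14 (D : Matrix (Fin 11) (Fin 11) ℝ) (h : IsDeriv c14 D) :
    D 2 2 = D 0 0 + D 1 1 ∧
    D 3 3 = D 0 0 + D 2 2 ∧
    D 4 4 = D 0 0 + D 3 3 ∧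
    D 4 4 = D 1 1 + D 2 2 ∧
    D 7 7 = D 5 5 + D 6 6 ∧
    D 8 8 = D 5 5 + D 7 7 ∧
    D 9 9 = D 5 5 + D 8 8 ∧
    D 9 9 = D 6 6 + D 7 7 ∧
    D 10 10 = D 0 0 + D 5 5 ∧
    D 10 10 = D 1 1 + D 6 6 := by
  refine ⟨?_, ?_, ?_, ?_, ?_, ?_, ?_, ?_, ?_, ?_⟩
  · have := deriv_eq14 c14 D h 0 1 2
    simp (config := {decide := true}) [Fin.sum_univ_succ, c14, brk] at this
    linarith
  · have := deriv_eq14 c14 D h 0 2 3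
    simp (config := {decide := true}) [Fin.sum_univ_succ, c14, brk] at this
    linarith
  · have := deriv_eq14 c14 D h 0 3 4
    simp (config := {decide := true}) [Fin.sum_univ_succ, c14, brk] at this
    linarith
  · have := deriv_eq14 c14 D h 1 2 4
    simp (config := {decide := true}) [Fin.sum_univ_succ, c14, brk] at this
    linarith
  · have := deriv_eq14 c14 D h 5 6 7
    simp (config := {decide := true}) [Fin.sum_univ_succ, c14, brk] at this
    linarith
  · have := deriv_eq14 c14 D h 5 7 8
    simp (config := {decide := true}) [Fin.sum_univ_succ, c14, brk] at this
    linarith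
  · have := deriv_eq14 c14 D h 5 8 9
    simp (config := {decide := true}) [Fin.sum_univ_succ, c14, brk] at this
    linarith
  · have := deriv_eq14 c14 D h 6 7 9
    simp (config := {decide := true}) [Fin.sum_univ_succ, c14, brk] at this
    linarith
  · have := deriv_eq14 c14 D h 0 5 10
    simp (config := {decide := true}) [Fin.sum_univ_succ, c14, brk] at this
    linarith
  · have := deriv_eq14 c14 D h 1 6 10
    simp (config := {decide := true}) [Fin.sum_univ_succ, c14, brk] at this
    linarith

lemma wdist14 : ∀ i j : Fin 11, i ≠ j →
    (![1, 2, 3, 4, 5, -1, -2, -3, -4, -5, 0] : Fin 11 → ℤ) i ≠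
    (![1, 2, 3, 4, 5, -1, -2, -3, -4, -5, 0] : Fin 11 → ℤ) j := by decide

lemma v14_cast (i : Fin 11) :
    v14 i = ((![1, 2, 3, 4, 5, -1, -2, -3, -4, -5, 0] : Fin 11 → ℤ) i : ℝ) := by
  fin_cases i <;> norm_num [v14]

lemma v14_inj : ∀ i j : Fin 11, i ≠ j → v14 i ≠ v14 j := by
  intro i j hij h
  rw [v14_cast, v14_cast] at h
  exact wdist14 i j hij (by exact_mod_cast h)

set_option maxHeartbeats 2000000 in
theorem statement14 :
    (IsDeriv c14 D14 ∧ D14 ≠ 0 ∧ IsDiagonalizableR D14) ∧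
    (∀ D' : Matrix (Fin 11) (Fin 11) ℝ, IsDeriv c14 D' → D'.trace = 0) ∧
    (∀ D' : Matrix (Fin 11) (Fin 11) ℝ, IsDeriv c14 D' → IsDiagonalizableR D' →
      D' * D14 = D14 * D' → ∃ t : ℝ, D' = t • D14) := by
  have hD : D14 = Matrix.diagonal v14 := rfl
  refine ⟨⟨isDeriv_D14, ?_, ?_⟩, ?_, ?_⟩
  · intro h
    have h0 := congrFun (congrFun h 0) 0
    rw [show D14 0 0 = (1 : ℝ) from rfl] at h0
    simp at h0
  · exact ⟨1, ![1, 2, 3, 4, 5, -1, -2, -3, -4, -5, 0], by simp [D14]⟩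
  · intro D' h
    obtain ⟨e1, e2, e3, e4, e5, e6, e7, e8, e9, e10⟩ := diag_eqs14 D' h
    have ht : D'.trace = ∑ i, D' i i := by simp [Matrix.trace, Matrix.diag]
    rw [ht, Fin.sum_univ_succ, Fin.sum_univ_succ, Fin.sum_univ_succ, Fin.sum_univ_succ,
      Fin.sum_univ_succ, Fin.sum_univ_succ, Fin.sum_univ_succ, Fin.sum_univ_succ,
      Fin.sum_univ_succ, Fin.sum_univ_succ, Fin.sum_univ_one]
    show D' 0 0 + (D' 1 1 + (D' 2 2 + (D' 3 3 + (D' 4 4 + (D' 5 5 + (D' 6 6 +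
      (D' 7 7 + (D' 8 8 + (D' 9 9 + D' 10 10))))))))) = 0
    linarith
  · intro D' h _ hc
    obtain ⟨e1, e2, e3, e4, e5, e6, e7, e8, e9, e10⟩ := diag_eqs14 D' h
    have hod : ∀ i j : Fin 11, i ≠ j → D' i j = 0 := by
      intro i j hij
      have hcij := congrFun (congrFun hc i) j
      rw [hD, Matrix.mul_diagonal, Matrix.diagonal_mul] at hcij
      have h2 : D' i j * (v14 j - v14 i) = 0 := by rw [mul_sub, hcij]; ring
      rcases mul_eq_zero.mp h2 with h' | h'
      · exact h'
      · exact absurd (by linarith : v14 i = v14 j) (v14_inj i j hij)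
    refine ⟨D' 0 0, ?_⟩
    ext i j
    rw [Matrix.smul_apply, hD, smul_eq_mul]
    by_cases hij : i = j
    · subst hij
      rw [Matrix.diagonal_apply_eq]
      fin_cases i
      · show D' 0 0 = D' 0 0 * v14 0
        rw [show v14 0 = (1 : ℝ) from rfl]; linarith
      · show D' 1 1 = D' 0 0 * v14 1
        rw [show v14 1 = (2 : ℝ) from rfl]; linarith
      · show D' 2 2 = D' 0 0 * v14 2
        rw [show v14 2 = (3 : ℝ) from rfl]; linarith
      · show D' 3 3 = D' 0 0 * v14 3
        rw [show v14 3 = (4 : ℝ) from rfl]; linarith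
      · show D' 4 4 = D' 0 0 * v14 4
        rw [show v14 4 = (5 : ℝ) from rfl]; linarith
      · show D' 5 5 = D' 0 0 * v14 5
        rw [show v14 5 = (-1 : ℝ) from rfl]; linarith
      · show D' 6 6 = D' 0 0 * v14 6
        rw [show v14 6 = (-2 : ℝ) from rfl]; linarith
      · show D' 7 7 = D' 0 0 * v14 7
        rw [show v14 7 = (-3 : ℝ) from rfl]; linarith
      · show D' 8 8 = D' 0 0 * v14 8
        rw [show v14 8 = (-4 : ℝ) from rfl]; linarith
      · show D' 9 9 = D' 0 0 * v14 9
        rw [show v14 9 = (-5 : ℝ) from rfl]; linarith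
      · show D' 10 10 = D' 0 0 * v14 10
        rw [show v14 10 = (0 : ℝ) from rfl]; linarith
    · rw [Matrix.diagonal_apply_ne _ hij, mul_zero]
      exact hod i j hij


end RNPaper
end

section
/- Let 𝔫 be the 8-dimensional nilpotent Lie algebra with basis X₁,…,X₇, Y and nonzero basis brackets (up to antisymmetry) [X₁,X₂]=X₄, [X₁,X₄]=X₅, [X₁,X₅]=X₆, [X₁,X₆]=X₇, [X₂,X₃]=X₆+X₇, [X₃,X₄]=−X₇, [X₁,X₃]=Y. Then: (a) the diagonal map D = Diag(0,1,0,1,1,1,1,0) (with respect to the ordered basis X₁,…,X₇,Y) is a derivation of 𝔫 with tr D = 5 > 0; (b) the center of 𝔫 is spanned by X₇ and Y; (c) for every derivation D′ of 𝔫 which is diagonalizable over ℝ, the restriction of D′ to the center of 𝔫 is singular (i.e. has 0 as an eigenvalue). -/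
open scoped BigOperators

namespace RNPaper

variable {n : ℕ}

/-- The center `𝔷(𝔫) = {x : [x,𝔫] = 0}`. -/
def centerSet {N : ℕ} (c : SC N) : Set (Fin N → ℝ) := {x | ∀ y, br c x y = 0}

/-- Proposition 4.3 (i): basis `X₁,…,X₇ = e₀,…,e₆`, `Y = e₇`. -/
def c15 : SC 8 :=
  brk 0 1 3 1 + brk 0 3 4 1 + brk 0 4 5 1 + brk 0 5 6 1 +
    brk 1 2 5 1 + brk 1 2 6 1 + brk 2 3 6 (-1) + brk 0 2 7 1

noncomputable def D15 : Matrix (Fin 8) (Fin 8) ℝ :=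
  Matrix.diagonal ![0, 1, 0, 1, 1, 1, 1, 0]

namespace CAux

def brkZ (i j k : Fin 8) (v : ℤ) : Fin 8 → Fin 8 → Fin 8 → ℤ :=
  fun p q r => if p = i ∧ q = j ∧ r = k then v else if p = j ∧ q = i ∧ r = k then -v else 0

def cZ : Fin 8 → Fin 8 → Fin 8 → ℤ := fun p q r =>
  brkZ 0 1 3 1 p q r + brkZ 0 3 4 1 p q r + brkZ 0 4 5 1 p q r + brkZ 0 5 6 1 p q r +
  brkZ 1 2 5 1 p q r + brkZ 1 2 6 1 p q r + brkZ 2 3 6 (-1) p q r + brkZ 0 2 7 1 p q r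

lemma brk_cast1 (i j k p q r : Fin 8) :
    brk i j k (1 : ℝ) p q r = ((brkZ i j k 1 p q r : ℤ) : ℝ) := by
  simp only [brk, brkZ]; split_ifs <;> norm_num

lemma brk_castm1 (i j k p q r : Fin 8) :
    brk i j k (-1 : ℝ) p q r = ((brkZ i j k (-1) p q r : ℤ) : ℝ) := by
  simp only [brk, brkZ]; split_ifs <;> norm_num

lemma c15_cast (p q r : Fin 8) : c15 p q r = ((cZ p q r : ℤ) : ℝ) := by
  simp only [c15, Pi.add_apply, brk_cast1, brk_castm1, cZ]
  push_cast
  ring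

def dZ : Fin 8 → ℤ := ![0, 1, 0, 1, 1, 1, 1, 0]

lemma cZ_cond : ∀ i j k : Fin 8, cZ i j k ≠ 0 → dZ k = dZ i + dZ j := by decide

lemma cZ_67 : ∀ j k : Fin 8, cZ 6 j k = 0 ∧ cZ 7 j k = 0 := by decide

end CAux

namespace CAux

lemma br_single_right {n : ℕ} (c : SC n) (x : Fin n → ℝ) (a : Fin n) :
    br c x (Pi.single a 1) = fun k => ∑ i, x i * c i a k := by
  funext k
  simp only [br]
  refine Finset.sum_congr rfl fun i _ => ?_
  rw [Finset.sum_eq_single a]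
  · simp
  · intro b _ hb; simp [Pi.single_apply, hb]
  · simp

lemma br_single_left {n : ℕ} (c : SC n) (y : Fin n → ℝ) (a : Fin n) :
    br c (Pi.single a 1) y = fun k => ∑ j, y j * c a j k := by
  funext k
  simp only [br]
  rw [Finset.sum_eq_single a]
  · refine Finset.sum_congr rfl fun j _ => by simp
  · intro b _ hb
    refine Finset.sum_eq_zero fun j _ => by simp [Pi.single_apply, hb]
  · simp

lemma br_single_single {n : ℕ} (c : SC n) (a b : Fin n) :
    br c (Pi.single a 1) (Pi.single b 1) = fun k => c a b k := by
  rw [br_single_right]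
  funext k
  rw [Finset.sum_eq_single a]
  · simp
  · intro i _ hi; simp [Pi.single_apply, hi]
  · simp

lemma mem_center_iff {n : ℕ} (c : SC n) (x : Fin n → ℝ) :
    x ∈ centerSet c ↔ ∀ j k : Fin n, (∑ i, x i * c i j k) = 0 := by
  constructor
  · intro h j k
    have h2 := h (Pi.single j 1)
    rw [br_single_right] at h2
    exact congrFun h2 k
  · intro h y
    funext k
    show (∑ i, ∑ j, x i * y j * c i j k) = 0
    rw [Finset.sum_comm]
    refine Finset.sum_eq_zero fun j _ => ?_
    have h2 : (∑ i, x i * y j * c i j k) = y j * ∑ i, x i * c i j k := by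
      rw [Finset.mul_sum]; exact Finset.sum_congr rfl fun i _ => by ring
    rw [h2, h j k, mul_zero]

lemma mulVec_single' {n : ℕ} (M : Matrix (Fin n) (Fin n) ℝ) (a : Fin n) :
    M.mulVec (Pi.single a 1) = fun p => M p a := by
  funext p
  simp [Matrix.mulVec, dotProduct, Pi.single_apply, mul_ite]

lemma diag_isDeriv {n : ℕ} (c : SC n) (d : Fin n → ℝ)
    (h : ∀ i j k, c i j k ≠ 0 → d k = d i + d j) :
    IsDeriv c (Matrix.diagonal d) := by
  intro x y
  funext k
  simp only [br, Matrix.mulVec_diagonal, Pi.add_apply, Finset.mul_sum,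
    ← Finset.sum_add_distrib]
  refine Finset.sum_congr rfl fun i _ => ?_
  refine Finset.sum_congr rfl fun j _ => ?_
  by_cases hc : c i j k = 0
  · simp [hc]
  · rw [h i j k hc]; ring

lemma key_eq {n : ℕ} (c : SC n) (D' : Matrix (Fin n) (Fin n) ℝ) (h : IsDeriv c D')
    (i j k : Fin n) :
    (∑ l, D' k l * c i j l) =
      (∑ p, D' p i * c p j k) + (∑ p, D' p j * c i p k) := by
  have h2 := h (Pi.single i 1) (Pi.single j 1)
  rw [br_single_single] at h2
  rw [mulVec_single', mulVec_single'] at h2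
  rw [br_single_right, br_single_left] at h2
  have h3 := congrFun h2 k
  simpa [Matrix.mulVec, dotProduct] using h3

end CAux

namespace CAux

lemma c67_zero (j k : Fin 8) : c15 6 j k = 0 ∧ c15 7 j k = 0 := by
  constructor <;> rw [c15_cast]
  · rw [(cZ_67 j k).1]; norm_num
  · rw [(cZ_67 j k).2]; norm_num

noncomputable def dR : Fin 8 → ℝ := fun k => ((dZ k : ℤ) : ℝ)

lemma hD15 : D15 = Matrix.diagonal dR := by
  unfold D15
  have : (![0, 1, 0, 1, 1, 1, 1, 0] : Fin 8 → ℝ) = dR := by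
    funext k; fin_cases k <;> norm_num [dZ, dR]
  rw [this]

lemma dZ_sum : (∑ k, dZ k) = (5 : ℤ) := by decide

end CAux

open CAux in
theorem statement15_aux :
    (IsDeriv c15 D15 ∧ D15.trace = 5 ∧ 0 < D15.trace) ∧
    centerSet c15 = (Submodule.span ℝ
      ({Pi.single (6 : Fin 8) (1 : ℝ), Pi.single (7 : Fin 8) (1 : ℝ)} :
        Set (Fin 8 → ℝ)) : Set (Fin 8 → ℝ)) ∧
    (∀ D' : Matrix (Fin 8) (Fin 8) ℝ, IsDeriv c15 D' → IsDiagonalizableR D' →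
      ∃ x : Fin 8 → ℝ, x ∈ centerSet c15 ∧ x ≠ 0 ∧ D'.mulVec x = 0) := by
  have htr : D15.trace = 5 := by
    rw [hD15, Matrix.trace_diagonal]
    have : (∑ k, dR k) = (((∑ k, dZ k) : ℤ) : ℝ) := by
      rw [Int.cast_sum]; rfl
    rw [this, dZ_sum]; norm_num
  have hb : centerSet c15 = (Submodule.span ℝ
      ({Pi.single (6 : Fin 8) (1 : ℝ), Pi.single (7 : Fin 8) (1 : ℝ)} :
        Set (Fin 8 → ℝ)) : Set (Fin 8 → ℝ)) := by
    ext x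
    rw [SetLike.mem_coe, Submodule.mem_span_pair]
    constructor
    · intro hx
      rw [mem_center_iff] at hx
      have e0 := hx 1 3
      have e1 := hx 0 3
      have e2 := hx 0 7
      have e3 := hx 0 4
      have e4 := hx 0 5
      have e5 := hx 0 6
      simp +decide [Fin.sum_univ_eight, c15_cast, cZ, brkZ] at e0 e1 e2 e3 e4 e5
      refine ⟨x 6, x 7, ?_⟩
      funext k
      fin_cases k <;> simp +decide [Pi.single_apply] <;> linarith
    · rintro ⟨a, b, rfl⟩
      rw [mem_center_iff]
      intro j k
      have z6 := (c67_zero j k).1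
      have z7 := (c67_zero j k).2
      simp +decide [Fin.sum_univ_eight, Pi.single_apply, z6, z7]
  refine ⟨⟨?_, htr, by rw [htr]; norm_num⟩, hb, ?_⟩
  · -- derivation
    rw [hD15]
    apply diag_isDeriv
    intro i j k hc
    have hz : cZ i j k ≠ 0 := by
      intro e; apply hc; rw [c15_cast, e]; norm_num
    have := cZ_cond i j k hz
    simp only [dR]
    exact_mod_cast this
  · -- part (c)
    intro D' hder _hdiag
    have K := key_eq c15 D' hder
    have E050 := K 0 5 0
    have E051 := K 0 5 1
    have E052 := K 0 5 2
    have E057 := K 0 5 7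
    have E042 := K 0 4 2
    have E064 := K 0 6 4
    have E065 := K 0 6 5
    have E066 := K 0 6 6
    have E020 := K 0 2 0
    have E027 := K 0 2 7
    have E073 := K 0 7 3
    have E074 := K 0 7 4
    have E075 := K 0 7 5
    have E076 := K 0 7 6
    have E077 := K 0 7 7
    have E234 := K 2 3 4
    have E014 := K 0 1 4
    have E013 := K 0 1 3
    have E034 := K 0 3 4
    have E045 := K 0 4 5
    have E035 := K 0 3 5
    have E046 := K 0 4 6
    have E056 := K 0 5 6
    have E125 := K 1 2 5
    have E126 := K 1 2 6
    simp +decide [Fin.sum_univ_eight, c15_cast, cZ, brkZ] at E050 E051 E052 E057 E042 E064 E065 E066 E020 E027 E073 E074 E075 E076 E077 E234 E014 E013 E034 E045 E035 E046 E056 E125 E126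
    have f06 : D' 0 6 = 0 := by linarith
    have f16 : D' 1 6 = 0 := by linarith
    have f26 : D' 2 6 = 0 := by linarith
    have f36 : D' 3 6 = 0 := by linarith
    have f46 : D' 4 6 = 0 := by linarith
    have f56 : D' 5 6 = 0 := by linarith
    have f76 : D' 7 6 = 0 := by linarith
    have f07 : D' 0 7 = 0 := by linarith
    have f17 : D' 1 7 = 0 := by linarith
    have f27 : D' 2 7 = 0 := by linarith
    have f37 : D' 3 7 = 0 := by linarith
    have f47 : D' 4 7 = 0 := by linarith
    have f57 : D' 5 7 = 0 := by linarith
    have f77 : D' 7 7 = 0 := by linarith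
    by_cases h66 : D' 6 6 = 0
    · refine ⟨(Pi.single (6 : Fin 8) (1 : ℝ)), ?_, ?_, ?_⟩
      · rw [hb, SetLike.mem_coe]
        exact Submodule.subset_span (by simp)
      · intro h
        have := congrFun h 6
        simp at this
      · rw [mulVec_single']
        funext k
        fin_cases k <;> simp [f06, f16, f26, f36, f46, f56, h66, f76]
    · refine ⟨(fun k => if k = 6 then D' 6 7 else if k = 7 then -(D' 6 6) else 0 :
          Fin 8 → ℝ), ?_, ?_, ?_⟩
      · rw [hb, SetLike.mem_coe, Submodule.mem_span_pair]
        refine ⟨D' 6 7, -(D' 6 6), ?_⟩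
        funext k
        fin_cases k <;> simp +decide [Pi.single_apply]
      · intro h
        have h7 := congrFun h 7
        simp +decide at h7
        exact h66 h7
      · funext k
        simp only [Matrix.mulVec, dotProduct, Pi.zero_apply]
        simp +decide [Fin.sum_univ_eight]
        fin_cases k <;>
          simp [f06, f07, f16, f17, f26, f27, f36, f37, f46, f47, f56, f57,
            f76, f77] <;> ring


theorem statement15 :
    (IsDeriv c15 D15 ∧ D15.trace = 5 ∧ 0 < D15.trace) ∧
    centerSet c15 = (Submodule.span ℝ
      ({Pi.single (6 : Fin 8) (1 : ℝ), Pi.single (7 : Fin 8) (1 : ℝ)} :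
        Set (Fin 8 → ℝ)) : Set (Fin 8 → ℝ)) ∧
    (∀ D' : Matrix (Fin 8) (Fin 8) ℝ, IsDeriv c15 D' → IsDiagonalizableR D' →
      ∃ x : Fin 8 → ℝ, x ∈ centerSet c15 ∧ x ≠ 0 ∧ D'.mulVec x = 0) := by
  exact statement15_aux

end RNPaper
end
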